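/- arXiv:1204.0620 — 8 statements merged into one kernel-verified Lean document; each statement's English description precedes it below -/
import Mathlib

section
/- Let S be a positive contraction on a Hilbert space H' and X = √(S(I−S)). Then ran(X) + ran(I−S) = ran((I−S)^{1/2}). -/
set_option maxHeartbeats 1000000 in
/-- If `S` is a positive contraction on a Hilbert space and `X = √(S(I-S))`, then
`ran X + ran (I - S) = ran ((I-S)^{1/2})` (as linear subspaces, sums of ranges being
the supremum of the range submodules). -/
theorem range_sqrt_add_range_one_sub {H : Type*} [NormedAddCommGroup H]
    [InnerProductSpace ℂ H] [CompleteSpace H] (S : H →L[ℂ] H)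
    (hS : 0 ≤ S) (hS1 : S ≤ 1) :
    LinearMap.range (CFC.sqrt (S * (1 - S))).toLinearMap
        ⊔ LinearMap.range (1 - S).toLinearMap
      = LinearMap.range (CFC.sqrt (1 - S)).toLinearMap := by
  have hsa : IsSelfAdjoint S := .of_nonneg hS
  have hspec0 : ∀ x ∈ spectrum ℝ S, 0 ≤ x :=
    (StarOrderedRing.nonneg_iff_spectrum_nonneg (R := ℝ) S).mp hS
  have h1S : (0 : H →L[ℂ] H) ≤ 1 - S := sub_nonneg.mpr hS1
  have hspec1 : ∀ x ∈ spectrum ℝ S, x ≤ 1 := by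
    intro x hx
    have h := (StarOrderedRing.nonneg_iff_spectrum_nonneg (R := ℝ) (1 - S)).mp h1S
    have h2 : (1 : ℝ) - x ∈ spectrum ℝ ((algebraMap ℝ (H →L[ℂ] H)) 1 - S) := by
      rw [← spectrum.singleton_sub_eq]
      exact Set.sub_mem_sub rfl hx
    rw [map_one] at h2
    linarith [h _ h2]
  -- express 1 - S as cfc
  have hone_sub : (1 : H →L[ℂ] H) - S = cfc (fun x : ℝ => 1 - x) S := by
    rw [cfc_sub (fun _ : ℝ => 1) (fun x : ℝ => x), cfc_const_one ℝ S, cfc_id' ℝ S]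
  have hmul : S * (1 - S) = cfc (fun x : ℝ => x * (1 - x)) S := by
    rw [cfc_mul _ _ S, cfc_id' ℝ S, ← hone_sub]
  -- express the square roots as cfc
  have hC : CFC.sqrt ((1 : H →L[ℂ] H) - S) = cfc (fun x : ℝ => Real.sqrt (1 - x)) S := by
    refine CFC.sqrt_unique ?_ (cfc_nonneg fun x _ => Real.sqrt_nonneg _)
    rw [← cfc_mul _ _ S, hone_sub]
    exact cfc_congr fun x hx => Real.mul_self_sqrt (by linarith [hspec1 x hx])
  have hA : CFC.sqrt (S * (1 - S)) = cfc (fun x : ℝ => Real.sqrt (x * (1 - x))) S := by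
    refine CFC.sqrt_unique ?_ (cfc_nonneg fun x _ => Real.sqrt_nonneg _)
    rw [← cfc_mul _ _ S, hmul]
    refine cfc_congr fun x hx => Real.mul_self_sqrt
      (mul_nonneg (hspec0 x hx) (by linarith [hspec1 x hx]))
  set D : H →L[ℂ] H := cfc (fun x : ℝ => Real.sqrt x) S with hD
  -- factorizations
  have hAC : CFC.sqrt (S * (1 - S)) = CFC.sqrt (1 - S) * D := by
    rw [hA, hC, hD, ← cfc_mul _ _ S]
    refine cfc_congr fun x hx => ?_
    rw [← Real.sqrt_mul (by linarith [hspec1 x hx]) x, mul_comm (1 - x) x]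
  have hBC : (1 : H →L[ℂ] H) - S = CFC.sqrt (1 - S) * CFC.sqrt (1 - S) :=
    (CFC.sqrt_mul_sqrt_self _ h1S).symm
  -- the key identity
  have hkey : CFC.sqrt ((1 : H →L[ℂ] H) - S)
      = CFC.sqrt (S * (1 - S)) * D + (1 - S) * CFC.sqrt (1 - S) := by
    rw [hA, hC, hone_sub, ← cfc_mul _ _ S, ← cfc_mul _ _ S, ← cfc_add (a := S) _ _]
    refine cfc_congr fun x hx => ?_
    have hx0 := hspec0 x hx
    have hx1 := hspec1 x hx
    have h1 : Real.sqrt (x * (1 - x)) * Real.sqrt x = x * Real.sqrt (1 - x) := by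
      rw [mul_comm x (1 - x), Real.sqrt_mul (by linarith) x, mul_assoc,
        Real.mul_self_sqrt hx0, mul_comm]
    rw [h1]; ring
  refine le_antisymm (sup_le ?_ ?_) ?_
  · rw [hAC]
    rintro y ⟨x, rfl⟩
    exact ⟨D x, rfl⟩
  · conv_lhs => rw [hBC]
    rintro y ⟨x, rfl⟩
    exact ⟨CFC.sqrt (1 - S) x, rfl⟩
  · rintro y ⟨x, rfl⟩
    have hx : CFC.sqrt ((1 : H →L[ℂ] H) - S) x
        = CFC.sqrt (S * (1 - S)) (D x) + (1 - S) (CFC.sqrt (1 - S) x) := by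
      conv_lhs => rw [hkey]
      simp [ContinuousLinearMap.add_apply, ContinuousLinearMap.mul_apply]
    rw [ContinuousLinearMap.coe_coe, hx]
    exact Submodule.add_mem_sup ⟨D x, rfl⟩ ⟨CFC.sqrt (1 - S) x, rfl⟩
end

section
/- Let P and Q be orthogonal projections on a Hilbert space H such that the sum of their ranges 𝒫 + 𝒬 is closed. Then the orthogonal projection R onto 𝒫 + 𝒬 belongs to the C*-algebra generated by P, Q and the identity operator. -/
set_option maxHeartbeats 1000000

open scoped InnerProductSpace

section CoerciveAux
variable {H : Type*} [NormedAddCommGroup H] [InnerProductSpace ℂ H] [CompleteSpace H]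

/-- Open-mapping-theorem coercivity: if the sum of ranges of two self-adjoint operators
is closed, then `c * ‖x‖ ≤ ‖P x‖ + ‖Q x‖` on the sum of the ranges. -/
theorem coercive_aux (P Q : H →L[ℂ] H) (hPsa : IsSelfAdjoint P)
    (hQsa : IsSelfAdjoint Q)
    (hclosed : IsClosed ((LinearMap.range P.toLinearMap ⊔ LinearMap.range Q.toLinearMap :
        Submodule ℂ H) : Set H)) :
    ∃ c > 0, ∀ x ∈ (LinearMap.range P.toLinearMap ⊔ LinearMap.range Q.toLinearMap :
        Submodule ℂ H), c * ‖x‖ ≤ ‖P x‖ + ‖Q x‖ := by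
  set V : Submodule ℂ H := LinearMap.range P.toLinearMap ⊔ LinearMap.range Q.toLinearMap with hV
  haveI : CompleteSpace V := hclosed.completeSpace_coe
  have hSmem : ∀ z : H × H, P z.1 + Q z.2 ∈ V := fun z =>
    Submodule.mem_sup.2 ⟨P z.1, ⟨z.1, rfl⟩, Q z.2, ⟨z.2, rfl⟩, rfl⟩
  set S : (H × H) →L[ℂ] V :=
    ((P.comp (ContinuousLinearMap.fst ℂ H H)) + (Q.comp (ContinuousLinearMap.snd ℂ H H))).codRestrict
      V (fun z => hSmem z) with hS
  have hSsurj : Function.Surjective S := by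
    rintro ⟨y, hy⟩
    rcases Submodule.mem_sup.1 hy with ⟨p, hp, q, hq, rfl⟩
    rcases hp with ⟨a, rfl⟩
    rcases hq with ⟨b, rfl⟩
    exact ⟨(a, b), by ext; simp [hS]; rfl⟩
  obtain ⟨C, hC0, hC⟩ := ContinuousLinearMap.exists_preimage_norm_le S hSsurj
  refine ⟨1 / C, by positivity, fun x hx => ?_⟩
  obtain ⟨⟨a, b⟩, hab, hn⟩ := hC ⟨x, hx⟩
  have hx' : P a + Q b = x := congrArg Subtype.val hab
  have hna : ‖a‖ ≤ C * ‖x‖ := le_trans (le_max_left _ _) hn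
  have hnb : ‖b‖ ≤ C * ‖x‖ := le_trans (le_max_right _ _) hn
  have eP : ∀ u v : H, ⟪u, P v⟫_ℂ = ⟪P u, v⟫_ℂ := fun u v => by
    rw [← ContinuousLinearMap.adjoint_inner_left, hPsa.adjoint_eq]
  have eQ : ∀ u v : H, ⟪u, Q v⟫_ℂ = ⟪Q u, v⟫_ℂ := fun u v => by
    rw [← ContinuousLinearMap.adjoint_inner_left, hQsa.adjoint_eq]
  have e2 : ⟪x, x⟫_ℂ = ⟪P x, a⟫_ℂ + ⟪Q x, b⟫_ℂ := by
    conv_lhs => rw [← hx']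
    rw [inner_add_right, eP, eQ, hx']
  have h1 : ‖x‖ ^ 2 ≤ (‖P x‖ + ‖Q x‖) * (C * ‖x‖) := by
    have e1 : (‖x‖ : ℝ) ^ 2 = RCLike.re (⟪x, x⟫_ℂ) := by
      rw [← inner_self_eq_norm_sq (𝕜 := ℂ)]
    have r1 : RCLike.re (⟪P x, a⟫_ℂ) ≤ ‖P x‖ * ‖a‖ := re_inner_le_norm (𝕜 := ℂ) _ _
    have r2 : RCLike.re (⟪Q x, b⟫_ℂ) ≤ ‖Q x‖ * ‖b‖ := re_inner_le_norm (𝕜 := ℂ) _ _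
    have hPn : (0:ℝ) ≤ ‖P x‖ := norm_nonneg _
    have hQn : (0:ℝ) ≤ ‖Q x‖ := norm_nonneg _
    have := mul_le_mul_of_nonneg_left hna hPn
    have := mul_le_mul_of_nonneg_left hnb hQn
    rw [e1, e2, map_add]
    nlinarith
  rcases eq_or_lt_of_le (norm_nonneg x) with h0 | h0
  · simp [← h0]; positivity
  · rw [div_mul_eq_mul_div, div_le_iff₀ hC0]
    nlinarith

end CoerciveAux

/-- If `P`, `Q` are orthogonal projections on a Hilbert space whose ranges have closed sum,
then the orthogonal projection `R` onto `ran P + ran Q` belongs to the C*-algebra generated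
by `P`, `Q` and the identity (the closure of the star-subalgebra generated by `P` and `Q`). -/
theorem projection_onto_sum_mem_CstarAlgebra {H : Type*} [NormedAddCommGroup H]
    [InnerProductSpace ℂ H] [CompleteSpace H] (P Q R : H →L[ℂ] H)
    (hPsa : IsSelfAdjoint P) (hP2 : P * P = P)
    (hQsa : IsSelfAdjoint Q) (hQ2 : Q * Q = Q)
    (hclosed : IsClosed ((LinearMap.range P.toLinearMap ⊔ LinearMap.range Q.toLinearMap :
        Submodule ℂ H) : Set H))
    (hRsa : IsSelfAdjoint R) (hR2 : R * R = R)
    (hRrange : LinearMap.range R.toLinearMap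
      = LinearMap.range P.toLinearMap ⊔ LinearMap.range Q.toLinearMap) :
    R ∈ (StarAlgebra.adjoin ℂ {P, Q} :
      StarSubalgebra ℂ (H →L[ℂ] H)).topologicalClosure := by
  set M : StarSubalgebra ℂ (H →L[ℂ] H) :=
    (StarAlgebra.adjoin ℂ {P, Q}).topologicalClosure with hM
  have hPM : P ∈ M := StarSubalgebra.le_topologicalClosure _
    (StarAlgebra.subset_adjoin ℂ _ (by simp))
  have hQM : Q ∈ M := StarSubalgebra.le_topologicalClosure _
    (StarAlgebra.subset_adjoin ℂ _ (by simp))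
  set V : Submodule ℂ H := LinearMap.range P.toLinearMap ⊔ LinearMap.range Q.toLinearMap with hV
  set T : H →L[ℂ] H := P + Q with hT
  have hTM : T ∈ M := add_mem hPM hQM
  have hTsa : IsSelfAdjoint T := hPsa.add hQsa
  -- inner product identities
  have eP : ∀ u v : H, ⟪u, P v⟫_ℂ = ⟪P u, v⟫_ℂ := fun u v => by
    rw [← ContinuousLinearMap.adjoint_inner_left, hPsa.adjoint_eq]
  have eQ : ∀ u v : H, ⟪u, Q v⟫_ℂ = ⟪Q u, v⟫_ℂ := fun u v => by
    rw [← ContinuousLinearMap.adjoint_inner_left, hQsa.adjoint_eq]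
  have eR : ∀ u v : H, ⟪u, R v⟫_ℂ = ⟪R u, v⟫_ℂ := fun u v => by
    rw [← ContinuousLinearMap.adjoint_inner_left, hRsa.adjoint_eq]
  -- algebraic identities
  have hRfix : ∀ y ∈ V, R y = y := by
    intro y hy
    rw [← hRrange] at hy
    obtain ⟨z, rfl⟩ := hy
    have : (R * R) z = R z := by rw [hR2]
    simpa [ContinuousLinearMap.mul_apply] using this
  have hRV : ∀ x, R x ∈ V := fun x => by
    rw [← hRrange]; exact ⟨x, rfl⟩
  have hRT : R * T = T := by
    ext x
    simp only [ContinuousLinearMap.mul_apply]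
    exact hRfix (T x) (by
      have : T x = P x + Q x := rfl
      rw [this]
      exact Submodule.add_mem V (Submodule.mem_sup_left ⟨x, rfl⟩)
        (Submodule.mem_sup_right ⟨x, rfl⟩))
  have hTR : T * R = T := by
    have := congrArg star hRT
    rwa [star_mul, hTsa.star_eq, hRsa.star_eq] at this
  -- norm of R
  have hRnorm : ∀ x, ‖R x‖ ≤ ‖x‖ := by
    intro x
    have h1 : ⟪R x, x⟫_ℂ = ⟪R x, R x⟫_ℂ := by
      nth_rewrite 1 [show R x = R (R x) by
        have : (R * R) x = R x := by rw [hR2]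
        simpa [ContinuousLinearMap.mul_apply] using this.symm]
      rw [← eR]
    have h2 : ‖R x‖ ^ 2 ≤ ‖R x‖ * ‖x‖ := by
      have := re_inner_le_norm (𝕜 := ℂ) (R x) x
      rw [h1, inner_self_eq_norm_sq (𝕜 := ℂ)] at this
      nlinarith [norm_nonneg (R x), norm_nonneg x]
    nlinarith [norm_nonneg (R x), norm_nonneg x]
  -- quadratic form of T
  have hTinner : ∀ x, RCLike.re (⟪T x, x⟫_ℂ) = ‖P x‖ ^ 2 + ‖Q x‖ ^ 2 := by
    intro x
    have hPx : ⟪P x, x⟫_ℂ = ⟪P x, P x⟫_ℂ := by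
      nth_rewrite 1 [show P x = P (P x) by
        have : (P * P) x = P x := by rw [hP2]
        simpa [ContinuousLinearMap.mul_apply] using this.symm]
      rw [← eP]
    have hQx : ⟪Q x, x⟫_ℂ = ⟪Q x, Q x⟫_ℂ := by
      nth_rewrite 1 [show Q x = Q (Q x) by
        have : (Q * Q) x = Q x := by rw [hQ2]
        simpa [ContinuousLinearMap.mul_apply] using this.symm]
      rw [← eQ]
    have : ⟪T x, x⟫_ℂ = ⟪P x, x⟫_ℂ + ⟪Q x, x⟫_ℂ := by
      show ⟪P x + Q x, x⟫_ℂ = _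
      rw [inner_add_left]
    rw [this, map_add, hPx, hQx, inner_self_eq_norm_sq (𝕜 := ℂ),
      inner_self_eq_norm_sq (𝕜 := ℂ)]
  have eT : ∀ u v : H, ⟪u, T v⟫_ℂ = ⟪T u, v⟫_ℂ := fun u v => by
    rw [← ContinuousLinearMap.adjoint_inner_left, hTsa.adjoint_eq]
  -- bound ‖2•1 - T‖ ≤ 2
  have hT2norm : ‖(2:ℂ) • (1 : H →L[ℂ] H) - T‖ ≤ 2 := by
    refine ContinuousLinearMap.opNorm_le_bound _ (by norm_num) fun x => ?_
    have happ : ((2:ℂ) • (1 : H →L[ℂ] H) - T) x = (2:ℂ) • x - T x := by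
      simp
    rw [happ]
    have hsq : ‖(2:ℂ) • x - T x‖ ^ 2 ≤ (2 * ‖x‖) ^ 2 := by
      rw [norm_sub_sq (𝕜 := ℂ)]
      have e1 : RCLike.re (⟪(2:ℂ) • x, T x⟫_ℂ) = 2 * RCLike.re (⟪T x, x⟫_ℂ) := by
        rw [inner_smul_left, eT]
        simp [Complex.mul_re]
      have e2 : ‖(2:ℂ) • x‖ = 2 * ‖x‖ := by
        rw [norm_smul]; simp
      have e3 : ‖T x‖ ^ 2 ≤ 2 * RCLike.re (⟪T x, x⟫_ℂ) := by
        rw [hTinner]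
        have h := norm_add_le (P x) (Q x)
        have h' : ‖T x‖ = ‖P x + Q x‖ := rfl
        nlinarith [norm_nonneg (T x), norm_nonneg (P x), norm_nonneg (Q x),
          sq_nonneg (‖P x‖ - ‖Q x‖),
          mul_self_le_mul_self (norm_nonneg (T x)) (h' ▸ h)]
      have e4 : 0 ≤ RCLike.re (⟪T x, x⟫_ℂ) := by
        rw [hTinner]; positivity
      rw [e1, e2]
      nlinarith
    have h0 : (0:ℝ) ≤ 2 * ‖x‖ := by positivity
    nlinarith [norm_nonneg ((2:ℂ) • x - T x)]
  -- coercivity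
  obtain ⟨c, hc0, hc⟩ := coercive_aux P Q hPsa hQsa hclosed
  set c₀ : ℝ := c ^ 2 / 2 with hc₀def
  have hc₀ : 0 < c₀ := by positivity
  have hcoerc : ∀ ε : ℝ, 0 ≤ ε → ∀ v ∈ V, c₀ * ‖v‖ ≤ ‖T v + (ε:ℂ) • v‖ := by
    intro ε hε v hv
    have h1 : c₀ * ‖v‖ ^ 2 ≤ RCLike.re (⟪T v + (ε:ℂ) • v, v⟫_ℂ) := by
      rw [inner_add_left, map_add, hTinner, inner_smul_left]
      have hre : RCLike.re ((starRingEnd ℂ) (ε:ℂ) * ⟪v, v⟫_ℂ) = ε * ‖v‖ ^ 2 := by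
        rw [Complex.conj_ofReal, inner_self_eq_norm_sq_to_K (𝕜 := ℂ)]
        simp [← Complex.ofReal_pow, ← Complex.ofReal_mul]
      rw [hre]
      have := hc v hv
      nlinarith [norm_nonneg v, norm_nonneg (P v), norm_nonneg (Q v),
        mul_nonneg hε (sq_nonneg ‖v‖), sq_nonneg (‖P v‖ - ‖Q v‖),
        mul_self_le_mul_self (mul_nonneg hc0.le (norm_nonneg v)) (hc v hv)]
    have h2 : RCLike.re (⟪T v + (ε:ℂ) • v, v⟫_ℂ) ≤ ‖T v + (ε:ℂ) • v‖ * ‖v‖ :=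
      re_inner_le_norm (𝕜 := ℂ) _ _
    rcases eq_or_lt_of_le (norm_nonneg v) with h0 | h0
    · rw [← h0]; simp
    · nlinarith
  -- closedness of M
  have hclosedM : IsClosed (M : Set (H →L[ℂ] H)) :=
    StarSubalgebra.isClosed_topologicalClosure _
  have : R ∈ closure (M : Set (H →L[ℂ] H)) := by
    rw [Metric.mem_closure_iff]
    intro δ hδ
    set ε : ℝ := min (c₀ * δ / 2) 1 with hεdef
    have hε0 : 0 < ε := lt_min (by positivity) one_pos
    have hμ0 : (0:ℝ) < 2 + ε := by linarith
    have hμc : ((2 + ε : ℝ) : ℂ) ≠ 0 := by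
      exact_mod_cast Complex.ofReal_ne_zero.2 (ne_of_gt hμ0)
    set K : H →L[ℂ] H := (((2 + ε : ℝ) : ℂ))⁻¹ • ((2:ℂ) • (1 : H →L[ℂ] H) - T) with hKdef
    have hKM : K ∈ M := M.smul_mem (sub_mem (M.smul_mem (one_mem M) _) hTM) _
    have hKnorm : ‖K‖ < 1 := by
      have h1 : ‖K‖ ≤ ‖(((2 + ε : ℝ) : ℂ))⁻¹‖ * ‖(2:ℂ) • (1 : H →L[ℂ] H) - T‖ := by
        rw [hKdef]; exact norm_smul_le _ _
      have h2 : ‖(((2 + ε : ℝ) : ℂ))⁻¹‖ = (2 + ε)⁻¹ := by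
        rw [norm_inv, Complex.norm_real, Real.norm_of_nonneg hμ0.le]
      rw [h2] at h1
      have h3 : (2 + ε)⁻¹ * ‖(2:ℂ) • (1 : H →L[ℂ] H) - T‖ ≤ (2 + ε)⁻¹ * 2 := by
        apply mul_le_mul_of_nonneg_left hT2norm (by positivity)
      have h4 : (2 + ε)⁻¹ * 2 < 1 := by
        rw [inv_mul_lt_iff₀ hμ0]; linarith
      linarith
    set e : H →L[ℂ] H := T + (ε:ℂ) • 1 with hedef
    have he : e = ((2 + ε : ℝ) : ℂ) • ((1 : H →L[ℂ] H) - K) := by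
      rw [hKdef, smul_sub, smul_smul, mul_inv_cancel₀ hμc, one_smul]
      have hcast : ((2 + ε : ℝ) : ℂ) = 2 + (ε:ℂ) := by push_cast; ring
      rw [hedef, hcast]
      module
    set u : (H →L[ℂ] H)ˣ := Units.oneSub K hKnorm with hudef
    set w : H →L[ℂ] H := (((2 + ε : ℝ) : ℂ))⁻¹ • (↑u⁻¹ : H →L[ℂ] H) with hwdef
    have hew : e * w = 1 := by
      rw [he, hwdef, smul_mul_assoc, mul_smul_comm, smul_smul, mul_inv_cancel₀ hμc, one_smul]
      exact u.mul_inv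
    have hwe : w * e = 1 := by
      rw [he, hwdef, smul_mul_assoc, mul_smul_comm, smul_smul, inv_mul_cancel₀ hμc, one_smul]
      exact u.inv_mul
    have huM : (↑u⁻¹ : H →L[ℂ] H) ∈ M := by
      have hval : (↑u⁻¹ : H →L[ℂ] H) = ∑' n : ℕ, K ^ n := rfl
      rw [hval]
      have hs : Summable (fun n : ℕ => K ^ n) := summable_geometric_of_norm_lt_one hKnorm
      exact hclosedM.mem_of_tendsto hs.hasSum.tendsto_sum_nat
        (Filter.Eventually.of_forall fun n =>
          sum_mem fun i _ => pow_mem hKM i)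
    have hwM : w ∈ M := M.smul_mem huM _
    set A : H →L[ℂ] H := T * w with hAdef
    have hAM : A ∈ M := mul_mem hTM hwM
    have hReA : R * e = T + (ε:ℂ) • R := by
      rw [hedef, mul_add, hRT, mul_smul_comm, mul_one]
    have heR : e * R = T + (ε:ℂ) • R := by
      rw [hedef, add_mul, hTR, smul_mul_assoc, one_mul]
    have hRA : R - A = (ε:ℂ) • (R * w) := by
      have h1 : (R - A) * e = (ε:ℂ) • R := by
        rw [sub_mul, hAdef, mul_assoc, hwe, mul_one, hReA]
        abel
      calc R - A = (R - A) * (e * w) := by rw [hew, mul_one]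
        _ = ((R - A) * e) * w := by rw [mul_assoc]
        _ = ((ε:ℂ) • R) * w := by rw [h1]
        _ = (ε:ℂ) • (R * w) := smul_mul_assoc _ _ _
    have hRw : ‖R * w‖ ≤ c₀⁻¹ := by
      refine ContinuousLinearMap.opNorm_le_bound _ (by positivity) fun x => ?_
      set v : H := R (w x) with hvdef
      have hvV : v ∈ V := hRV _
      have hev : e v = R x := by
        have h2 : e * R = R * e := by rw [heR, hReA]
        have : e (R (w x)) = R ((e * w) x) := by
          calc e (R (w x)) = (e * R) (w x) := rfl
            _ = (R * e) (w x) := by rw [h2]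
            _ = R ((e * w) x) := rfl
        rw [hew] at this
        simpa using this
      have hcv : c₀ * ‖v‖ ≤ ‖R x‖ := by
        have := hcoerc ε hε0.le v hvV
        have happ : T v + (ε:ℂ) • v = e v := by simp [hedef]
        rw [happ, hev] at this
        exact this
      have hRx : ‖R x‖ ≤ ‖x‖ := hRnorm x
      have : ‖(R * w) x‖ = ‖v‖ := rfl
      rw [this]
      rw [inv_mul_eq_div, le_div_iff₀ hc₀]
      linarith [mul_comm c₀ ‖v‖ ▸ hcv]
    refine ⟨A, hAM, ?_⟩
    rw [dist_eq_norm, hRA, norm_smul]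
    have hεn : ‖((ε:ℝ):ℂ)‖ = ε := by
      rw [Complex.norm_real, Real.norm_of_nonneg hε0.le]
    rw [hεn]
    have h5 : ε * ‖R * w‖ ≤ ε * c₀⁻¹ := mul_le_mul_of_nonneg_left hRw hε0.le
    have h6 : ε ≤ c₀ * δ / 2 := min_le_left _ _
    have h7 : ε * c₀⁻¹ ≤ (c₀ * δ / 2) * c₀⁻¹ :=
      mul_le_mul_of_nonneg_right h6 (by positivity)
    have h8 : (c₀ * δ / 2) * c₀⁻¹ = δ / 2 := by
      field_simp
    have : ε * ‖R * w‖ < δ := by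
      rw [h8] at h7
      linarith
    exact this
  rwa [hclosedM.closure_eq] at this
end

section
/- Let P and Q be orthogonal projections on a Hilbert space H with 𝒫 + 𝒬 closed, where 𝒫 = ran(P) and 𝒬 = ran(Q). If R is the orthogonal projection onto 𝒫 + 𝒬, then there exists 0 < ε < 1 with [ε, 1] ∩ σ(P + (I−P)Q(I−P)) open and closed in σ(P + (I−P)Q(I−P)), and R equals the spectral projection of P + (I−P)Q(I−P) associated with [ε, 1]. -/
open ContinuousLinearMap Set
open scoped InnerProductSpace ComplexConjugate

set_option linter.unusedSectionVars false
section Aux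
variable {H : Type*} [NormedAddCommGroup H] [InnerProductSpace ℂ H] [CompleteSpace H]

private lemma sa_inner {A : H →L[ℂ] H} (hA : IsSelfAdjoint A) (x y : H) :
    ⟪A x, y⟫_ℂ = ⟪x, A y⟫_ℂ := by
  conv_lhs => rw [← hA.adjoint_eq]
  exact ContinuousLinearMap.adjoint_inner_left A y x

private lemma idem_mem_range_iff {A : H →L[ℂ] H} (hA2 : A * A = A) {x : H} :
    x ∈ LinearMap.range A.toLinearMap ↔ A x = x := by
  constructor
  · rintro ⟨y, rfl⟩
    have := congrArg (fun S : H →L[ℂ] H => S y) hA2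
    simpa using this
  · intro h
    exact ⟨x, h⟩

private lemma mem_orth_iff {A : H →L[ℂ] H} (hA : IsSelfAdjoint A) (hA2 : A * A = A) {x : H} :
    x ∈ (LinearMap.range A.toLinearMap)ᗮ ↔ A x = 0 := by
  constructor
  · intro h
    have h1 : ⟪A x, A x⟫_ℂ = 0 := by
      rw [sa_inner hA]
      have : A (A x) = A x := by
        have := congrArg (fun S : H →L[ℂ] H => S x) hA2
        simpa using this
      rw [this, ← inner_conj_symm]
      rw [Submodule.mem_orthogonal] at h
      rw [h (A x) ⟨x, rfl⟩, map_zero]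
    exact inner_self_eq_zero.mp h1
  · intro h
    rw [Submodule.mem_orthogonal]
    rintro u ⟨y, rfl⟩
    show ⟪A y, x⟫_ℂ = 0
    rw [sa_inner hA, h, inner_zero_right]

end Aux

set_option maxHeartbeats 2000000 in
/-- If `P`, `Q` are orthogonal projections whose ranges have closed sum and `R` is the
orthogonal projection onto `ran P + ran Q`, then there exists `0 < ε < 1` such that
`[ε,1] ∩ σ(P + (I-P)Q(I-P))` is open and closed in the spectrum of `T = P + (I-P)Q(I-P)`,
and `R` equals the spectral projection of `T` for `[ε, 1]` (the image of the characteristic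
function of `[ε,1]` under the functional calculus). -/
theorem projection_onto_sum_eq_spectral_projection {H : Type*} [NormedAddCommGroup H]
    [InnerProductSpace ℂ H] [CompleteSpace H] (P Q R : H →L[ℂ] H)
    (hPsa : IsSelfAdjoint P) (hP2 : P * P = P)
    (hQsa : IsSelfAdjoint Q) (hQ2 : Q * Q = Q)
    (hclosed : IsClosed ((LinearMap.range P.toLinearMap ⊔ LinearMap.range Q.toLinearMap :
        Submodule ℂ H) : Set H))
    (hRsa : IsSelfAdjoint R) (hR2 : R * R = R)
    (hRrange : LinearMap.range R.toLinearMap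
      = LinearMap.range P.toLinearMap ⊔ LinearMap.range Q.toLinearMap) :
    ∃ ε : ℝ, 0 < ε ∧ ε < 1 ∧
      IsClopen {x : spectrum ℝ (P + (1 - P) * Q * (1 - P)) | (x : ℝ) ∈ Set.Icc ε 1} ∧
      R = cfc (fun x : ℝ => if x ∈ Set.Icc ε 1 then (1 : ℝ) else 0)
        (P + (1 - P) * Q * (1 - P)) := by
  set p : Submodule ℂ H := LinearMap.range P.toLinearMap with hp
  set q : Submodule ℂ H := LinearMap.range Q.toLinearMap with hq
  set M : Submodule ℂ H := p ⊔ q with hMdef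
  set T : H →L[ℂ] H := P + (1 - P) * Q * (1 - P) with hTdef
  -- basic facts
  have hPP : ∀ x, P (P x) = P x := fun x => by
    have := congrArg (fun S : H →L[ℂ] H => S x) hP2; simpa using this
  have hQQ : ∀ x, Q (Q x) = Q x := fun x => by
    have := congrArg (fun S : H →L[ℂ] H => S x) hQ2; simpa using this
  have hRR : ∀ x, R (R x) = R x := fun x => by
    have := congrArg (fun S : H →L[ℂ] H => S x) hR2; simpa using this
  have h1Psa : IsSelfAdjoint (1 - P) := (IsSelfAdjoint.one _).sub hPsa
  have hTsa : IsSelfAdjoint T := by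
    have : IsSelfAdjoint ((1 - P) * Q * (1 - P)) := by
      rw [mul_assoc]
      simpa [mul_assoc] using hQsa.conjugate_self h1Psa
    exact hPsa.add this
  -- R fixes M
  have hRfix : ∀ m ∈ M, R m = m := fun m hm =>
    (idem_mem_range_iff hR2).mp (hRrange ▸ hm)
  have hRmem : ∀ x, R x ∈ M := fun x => hRrange ▸ LinearMap.mem_range_self _ x
  have hRker : ∀ x, x - R x ∈ Mᗮ := by
    intro x
    have : R (x - R x) = 0 := by simp [map_sub, hRR]
    rw [← hRrange]
    exact (mem_orth_iff hRsa hR2).mpr this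
  have hpM : p ≤ M := le_sup_left
  have hqM : q ≤ M := le_sup_right
  -- inner product formula for T
  have hTapp : ∀ x, T x = P x + (Q ((1:H →L[ℂ] H) x - P x) - P (Q ((1:H →L[ℂ] H) x - P x))) := by
    intro x; simp [hTdef, ContinuousLinearMap.add_apply, ContinuousLinearMap.mul_apply,
      ContinuousLinearMap.sub_apply]
  have hTinner : ∀ x, ⟪T x, x⟫_ℂ = ((‖P x‖ ^ 2 + ‖Q (x - P x)‖ ^ 2 : ℝ) : ℂ) := by
    intro x
    have h1 : ⟪P x, x⟫_ℂ = ((‖P x‖ ^ 2 : ℝ) : ℂ) := by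
      calc ⟪P x, x⟫_ℂ = ⟪P (P x), x⟫_ℂ := by rw [hPP]
        _ = ⟪P x, P x⟫_ℂ := sa_inner hPsa _ _
        _ = ((‖P x‖ ^ 2 : ℝ) : ℂ) := by
            rw [inner_self_eq_norm_sq_to_K]; norm_num
    have h2 : ⟪Q (x - P x) - P (Q (x - P x)), x⟫_ℂ = ((‖Q (x - P x)‖ ^ 2 : ℝ) : ℂ) := by
      have e1 : Q (x - P x) - P (Q (x - P x)) = (1 - P) (Q ((1 - P) x)) := by
        simp [ContinuousLinearMap.sub_apply]
      rw [e1, sa_inner h1Psa]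
      have e2 : (1 - P) x = x - P x := by simp [ContinuousLinearMap.sub_apply]
      rw [e2]
      calc ⟪Q (x - P x), x - P x⟫_ℂ = ⟪Q (Q (x - P x)), x - P x⟫_ℂ := by rw [hQQ]
        _ = ⟪Q (x - P x), Q (x - P x)⟫_ℂ := sa_inner hQsa _ _
        _ = ((‖Q (x - P x)‖ ^ 2 : ℝ) : ℂ) := by
            rw [inner_self_eq_norm_sq_to_K]; norm_num
    calc ⟪T x, x⟫_ℂ
        = ⟪P x, x⟫_ℂ + ⟪Q (x - P x) - P (Q (x - P x)), x⟫_ℂ := by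
          rw [hTapp x]
          simp only [ContinuousLinearMap.one_apply]
          rw [inner_add_left]
      _ = ((‖P x‖ ^ 2 + ‖Q (x - P x)‖ ^ 2 : ℝ) : ℂ) := by rw [h1, h2]; push_cast; ring
  -- Pythagoras for sa idempotents
  have hpyth : ∀ (A : H →L[ℂ] H), IsSelfAdjoint A → (∀ x, A (A x) = A x) →
      ∀ x, ‖x‖ ^ 2 = ‖A x‖ ^ 2 + ‖x - A x‖ ^ 2 := by
    intro A hA hAA x
    have horth : ⟪A x, x - A x⟫_ℂ = 0 := by
      rw [sa_inner hA, map_sub, hAA, sub_self, inner_zero_right]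
    have h := norm_add_sq (𝕜 := ℂ) (A x) (x - A x)
    rw [horth] at h
    have hx : A x + (x - A x) = x := by abel
    rw [hx] at h
    simpa using h
  have hre_le : ∀ z : ℂ, z.re ≤ ‖z‖ := fun z => by
    simpa using RCLike.re_le_norm (K := ℂ) z
  have hnormsq : ∀ v : H, (⟪v, v⟫_ℂ).re = ‖v‖ ^ 2 := fun v => by
    simpa using inner_self_eq_norm_sq (𝕜 := ℂ) v
  have hQnorm : ∀ y, ‖Q y‖ ≤ ‖y‖ := by
    intro y
    rcases le_or_gt ‖Q y‖ 0 with h | h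
    · exact h.trans (norm_nonneg y)
    · have h2 : ⟪Q y, Q y⟫_ℂ = ⟪y, Q y⟫_ℂ := by
        rw [sa_inner hQsa, hQQ]
      have h3 : (⟪y, Q y⟫_ℂ).re ≤ ‖y‖ * ‖Q y‖ := by
        calc (⟪y, Q y⟫_ℂ).re ≤ ‖⟪y, Q y⟫_ℂ‖ := hre_le _
          _ ≤ ‖y‖ * ‖Q y‖ := norm_inner_le_norm _ _
      have h4 : ‖Q y‖ * ‖Q y‖ ≤ ‖y‖ * ‖Q y‖ := by
        calc ‖Q y‖ * ‖Q y‖ = ‖Q y‖ ^ 2 := (sq ‖Q y‖).symm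
          _ = (⟪Q y, Q y⟫_ℂ).re := (hnormsq _).symm
          _ = (⟪y, Q y⟫_ℂ).re := by rw [h2]
          _ ≤ ‖y‖ * ‖Q y‖ := h3
      exact le_of_mul_le_mul_right h4 h
  -- the subspace N = M ⊓ pᗮ and the open mapping bound
  set N : Submodule ℂ H := M ⊓ pᗮ with hNdef
  have hNclosed : IsClosed (N : Set H) := by
    have : (N : Set H) = (M : Set H) ∩ (pᗮ : Set H) := rfl
    rw [this]
    exact hclosed.inter p.isClosed_orthogonal
  have hBmem : ∀ x, ((1 - P) * Q) x ∈ N := by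
    intro x
    constructor
    · have h1 : Q x ∈ M := hqM (LinearMap.mem_range_self _ x)
      have h2 : P (Q x) ∈ M := hpM (LinearMap.mem_range_self _ _)
      have : ((1 - P) * Q) x = Q x - P (Q x) := by
        simp [ContinuousLinearMap.mul_apply, ContinuousLinearMap.sub_apply]
      rw [this]
      exact M.sub_mem h1 h2
    · apply (mem_orth_iff hPsa hP2).mpr
      have : ((1 - P) * Q) x = Q x - P (Q x) := by
        simp [ContinuousLinearMap.mul_apply, ContinuousLinearMap.sub_apply]
      rw [this, map_sub, hPP, sub_self]
  have hNsurj : ∀ y ∈ N, ∃ x, ((1 - P) * Q) x = y := by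
    rintro y ⟨hyM, hyp⟩
    obtain ⟨a, ha, b, hb, hab⟩ := Submodule.mem_sup.mp hyM
    have hPy : P y = 0 := (mem_orth_iff hPsa hP2).mp hyp
    obtain ⟨b', rfl⟩ := hb
    have haP : P a = a := (idem_mem_range_iff hP2).mp ha
    refine ⟨b', ?_⟩
    have : ((1 - P) * Q) b' = Q b' - P (Q b') := by
      simp [ContinuousLinearMap.mul_apply, ContinuousLinearMap.sub_apply]
    rw [this]
    have hab' : a + Q b' = y := hab
    calc Q b' - P (Q b') = (a + Q b') - P (a + Q b') := by rw [map_add, haP]; abel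
      _ = y - P y := by rw [hab']
      _ = y := by rw [hPy, sub_zero]
  have : CompleteSpace N := hNclosed.completeSpace_coe
  obtain ⟨C, hCpos, hC⟩ := ContinuousLinearMap.exists_preimage_norm_le
    (((1 - P) * Q).codRestrict N hBmem)
    (fun y => by
      obtain ⟨x, hx⟩ := hNsurj y y.2
      exact ⟨x, Subtype.ext (by simpa using hx)⟩)
  have hQlow : ∀ y ∈ N, ‖y‖ ≤ C * ‖Q y‖ := by
    intro y hy
    obtain ⟨x, hx, hxn⟩ := hC ⟨y, hy⟩
    have hBx : ((1 - P) * Q) x = y := congrArg Subtype.val hx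
    have hxn' : ‖x‖ ≤ C * ‖y‖ := hxn
    have hPy : P y = 0 := (mem_orth_iff hPsa hP2).mp hy.2
    have key : (‖y‖ ^ 2 : ℝ) ≤ ‖x‖ * ‖Q y‖ := by
      have e0 : (1 - P) (Q x) = y := hBx
      have h5 : (1 - P) y = y := by
        simp [ContinuousLinearMap.sub_apply, hPy]
      have e1 : ⟪y, y⟫_ℂ = ⟪x, Q y⟫_ℂ := by
        calc ⟪y, y⟫_ℂ = ⟪(1 - P) (Q x), y⟫_ℂ := by rw [e0]
          _ = ⟪Q x, (1 - P) y⟫_ℂ := sa_inner h1Psa _ _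
          _ = ⟪Q x, y⟫_ℂ := by rw [h5]
          _ = ⟪x, Q y⟫_ℂ := sa_inner hQsa _ _
      have : (‖y‖ ^ 2 : ℝ) = (⟪x, Q y⟫_ℂ).re := by
        rw [← e1, hnormsq]
      rw [this]
      calc (⟪x, Q y⟫_ℂ).re ≤ ‖⟪x, Q y⟫_ℂ‖ := hre_le _
        _ ≤ ‖x‖ * ‖Q y‖ := norm_inner_le_norm _ _
    rcases eq_or_lt_of_le (norm_nonneg y) with h0 | h0
    · rw [← h0]; positivity
    · have : ‖y‖ * ‖y‖ ≤ (C * ‖Q y‖) * ‖y‖ := by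
        calc ‖y‖ * ‖y‖ = ‖y‖ ^ 2 := (sq ‖y‖).symm
          _ ≤ ‖x‖ * ‖Q y‖ := key
          _ ≤ (C * ‖y‖) * ‖Q y‖ :=
              mul_le_mul_of_nonneg_right hxn' (norm_nonneg _)
          _ = (C * ‖Q y‖) * ‖y‖ := by ring
      exact le_of_mul_le_mul_right this h0
  -- coercivity constant
  set c : ℝ := min 1 (1 / C ^ 2) with hcdef
  have hcpos : 0 < c := lt_min one_pos (by positivity)
  have hc1 : c ≤ 1 := min_le_left _ _
  have hcC : c ≤ 1 / C ^ 2 := min_le_right _ _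
  have hTm : ∀ m ∈ M, c * ‖m‖ ^ 2 ≤ (⟪T m, m⟫_ℂ).re := by
    intro m hm
    set y := m - P m with hydef
    have hyN : y ∈ N := by
      constructor
      · exact M.sub_mem hm (hpM (LinearMap.mem_range_self _ m))
      · apply (mem_orth_iff hPsa hP2).mpr
        rw [hydef, map_sub, hPP, sub_self]
    have hy : ‖y‖ ≤ C * ‖Q y‖ := hQlow y hyN
    have hy2 : ‖y‖ ^ 2 ≤ C ^ 2 * ‖Q y‖ ^ 2 := by
      calc ‖y‖ ^ 2 ≤ (C * ‖Q y‖) ^ 2 := by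
            apply sq_le_sq' _ hy
            have : 0 ≤ C * ‖Q y‖ := by positivity
            linarith [norm_nonneg y]
        _ = C ^ 2 * ‖Q y‖ ^ 2 := by ring
    have hre : (⟪T m, m⟫_ℂ).re = ‖P m‖ ^ 2 + ‖Q y‖ ^ 2 := by
      rw [hTinner m]
      exact Complex.ofReal_re _
    have hpm : ‖m‖ ^ 2 = ‖P m‖ ^ 2 + ‖y‖ ^ 2 := hpyth P hPsa hPP m
    rw [hre, hpm]
    have h1 : c * ‖P m‖ ^ 2 ≤ ‖P m‖ ^ 2 := by nlinarith [sq_nonneg ‖P m‖]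
    have h2 : c * ‖y‖ ^ 2 ≤ ‖Q y‖ ^ 2 := by
      have hC2 : (0:ℝ) < C ^ 2 := by positivity
      have := mul_le_mul_of_nonneg_right hcC (sq_nonneg ‖y‖)
      calc c * ‖y‖ ^ 2 ≤ (1 / C ^ 2) * ‖y‖ ^ 2 := this
        _ ≤ (1 / C ^ 2) * (C ^ 2 * ‖Q y‖ ^ 2) := by
            apply mul_le_mul_of_nonneg_left hy2 (by positivity)
        _ = ‖Q y‖ ^ 2 := by field_simp
    linarith [mul_add c (‖P m‖ ^ 2) (‖y‖ ^ 2)]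
  -- range and kernel of T
  have hTmem : ∀ x, T x ∈ M := by
    intro x
    rw [hTapp x]
    have h1 : P x ∈ M := hpM (LinearMap.mem_range_self _ x)
    have h2 : Q ((1 : H →L[ℂ] H) x - P x) ∈ M := hqM (LinearMap.mem_range_self _ _)
    have h3 : P (Q ((1 : H →L[ℂ] H) x - P x)) ∈ M := hpM (LinearMap.mem_range_self _ _)
    exact M.add_mem h1 (M.sub_mem h2 h3)
  have hker0 : ∀ z, ⟪T z, z⟫_ℂ = 0 → z ∈ Mᗮ := by
    intro z hz
    rw [hTinner z] at hz
    have hz' : ‖P z‖ ^ 2 + ‖Q (z - P z)‖ ^ 2 = 0 := by exact_mod_cast hz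
    have hPz : P z = 0 := by
      have : ‖P z‖ ^ 2 = 0 := by nlinarith [sq_nonneg ‖P z‖, sq_nonneg ‖Q (z - P z)‖]
      simpa using (pow_eq_zero_iff (two_ne_zero)).mp this
    have hQz : Q z = 0 := by
      have h1 : ‖Q (z - P z)‖ ^ 2 = 0 := by
        nlinarith [sq_nonneg ‖P z‖, sq_nonneg ‖Q (z - P z)‖]
      have h2 : Q (z - P z) = 0 := by
        simpa using (pow_eq_zero_iff (two_ne_zero)).mp h1
      rw [hPz, sub_zero] at h2
      exact h2
    have hzp : z ∈ pᗮ := (mem_orth_iff hPsa hP2).mpr hPz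
    have hzq : z ∈ qᗮ := (mem_orth_iff hQsa hQ2).mpr hQz
    rw [hMdef, ← Submodule.inf_orthogonal]
    exact ⟨hzp, hzq⟩
  have hMker : ∀ n ∈ Mᗮ, T n = 0 := by
    intro n hn
    have hnp : n ∈ pᗮ := Submodule.orthogonal_le hpM hn
    have hnq : n ∈ qᗮ := Submodule.orthogonal_le hqM hn
    have hPn : P n = 0 := (mem_orth_iff hPsa hP2).mp hnp
    have hQn : Q n = 0 := (mem_orth_iff hQsa hQ2).mp hnq
    rw [hTapp n]
    simp [ContinuousLinearMap.one_apply, hPn, hQn]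
  have hRT : R * T = T := by
    ext x
    exact hRfix _ (hTmem x)
  have hTR : T * R = T := by
    ext x
    show T (R x) = T x
    have h1 : T (x - R x) = 0 := hMker _ (hRker x)
    rw [map_sub] at h1
    have := sub_eq_zero.mp h1
    linear_combination (norm := module) this.symm
  -- M is contained in the closure of the range of T
  have hMclT : ∀ m ∈ M, m ∈ closure ((LinearMap.range T.toLinearMap : Submodule ℂ H) : Set H) := by
    intro m hm
    set W : Submodule ℂ H := LinearMap.range T.toLinearMap with hWdef
    have hWM : Wᗮ ≤ Mᗮ := by
      intro z hz
      apply hker0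
      rw [Submodule.mem_orthogonal] at hz
      exact hz (T z) (LinearMap.mem_range_self _ z)
    have h1 : Mᗮᗮ ≤ Wᗮᗮ := Submodule.orthogonal_le hWM
    have h2 : m ∈ Mᗮᗮ := Submodule.le_orthogonal_orthogonal M hm
    have h3 : m ∈ Wᗮᗮ := h1 h2
    rw [Submodule.orthogonal_orthogonal_eq_closure] at h3
    rwa [← Submodule.topologicalClosure_coe]
  -- inner product formula for (algebraMap r - T)
  have halg : ∀ (r : ℝ) (x : H), (algebraMap ℝ (H →L[ℂ] H) r) x = (r : ℂ) • x := by
    intro r x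
    rw [Algebra.algebraMap_eq_smul_one]
    show (r • (1 : H →L[ℂ] H)) x = (r : ℂ) • x
    rw [ContinuousLinearMap.smul_apply, ContinuousLinearMap.one_apply]
    exact RCLike.real_smul_eq_coe_smul (K := ℂ) r x
  have hLinner : ∀ (r : ℝ) (x : H), ⟪(algebraMap ℝ (H →L[ℂ] H) r - T) x, x⟫_ℂ =
      ((r * ‖x‖ ^ 2 - (‖P x‖ ^ 2 + ‖Q (x - P x)‖ ^ 2) : ℝ) : ℂ) := by
    intro r x
    rw [ContinuousLinearMap.sub_apply, inner_sub_left, halg, inner_smul_left, hTinner,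
      inner_self_eq_norm_sq_to_K]
    push_cast
    simp [Complex.conj_ofReal]
    try ring
  have hs_nonneg : ∀ x : H, (0:ℝ) ≤ ‖P x‖ ^ 2 + ‖Q (x - P x)‖ ^ 2 := fun x => by positivity
  have hs_le : ∀ x : H, ‖P x‖ ^ 2 + ‖Q (x - P x)‖ ^ 2 ≤ ‖x‖ ^ 2 := by
    intro x
    have h1 : ‖Q (x - P x)‖ ^ 2 ≤ ‖x - P x‖ ^ 2 := by
      have := hQnorm (x - P x)
      nlinarith [norm_nonneg (Q (x - P x)), norm_nonneg (x - P x)]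
    have h2 := hpyth P hPsa hPP x
    linarith
  -- spectrum is contained in {0} ∪ [c, 1]
  have hspec : ∀ lam ∈ spectrum ℝ T, lam = 0 ∨ (c ≤ lam ∧ lam ≤ 1) := by
    intro lam hlam
    by_contra hcon
    push_neg at hcon
    obtain ⟨hlam0, hlam1⟩ := hcon
    rw [spectrum.mem_iff] at hlam
    apply hlam
    rcases lt_or_ge lam c with hsmall | hge
    · -- lam < c
      rcases lt_or_gt_of_ne hlam0 with hneg | hpos
      · -- lam < 0 : the operator is negative definite
        apply isUnit_of_forall_le_norm_inner_map _ (c := ⟨-lam, by linarith⟩)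
          (by exact_mod_cast neg_pos.mpr hneg)
        intro x
        rw [hLinner]
        have h1 : ‖(((lam * ‖x‖ ^ 2 - (‖P x‖ ^ 2 + ‖Q (x - P x)‖ ^ 2)) : ℝ) : ℂ)‖ =
            |lam * ‖x‖ ^ 2 - (‖P x‖ ^ 2 + ‖Q (x - P x)‖ ^ 2)| := by
          rw [Complex.norm_real, Real.norm_eq_abs]
        rw [h1]
        have h2 := hs_nonneg x
        have h3 : lam * ‖x‖ ^ 2 - (‖P x‖ ^ 2 + ‖Q (x - P x)‖ ^ 2) ≤
            -( ‖x‖ ^ 2 * (-lam)) := by nlinarith [sq_nonneg ‖x‖]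
        have := neg_abs_le (lam * ‖x‖ ^ 2 - (‖P x‖ ^ 2 + ‖Q (x - P x)‖ ^ 2))
        change ‖x‖ ^ 2 * (-lam) ≤ _
        linarith
      · -- 0 < lam < c : use the auxiliary operator A = T + (1 - R)
        set A : H →L[ℂ] H := T + (1 - R) with hAdef
        -- A is coercive
        have hAcoer : ∀ x, c * ‖x‖ ^ 2 ≤ (⟪A x, x⟫_ℂ).re := by
          intro x
          have hx : A x = T x + (x - R x) := by
            simp [hAdef, ContinuousLinearMap.add_apply, ContinuousLinearMap.sub_apply]
          have hTx : T x = T (R x) := by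
            have := congrArg (fun S : H →L[ℂ] H => S x) hTR
            simpa using this.symm
          have horthT : ⟪T (R x), x - R x⟫_ℂ = 0 := by
            exact ((Submodule.mem_orthogonal M (x - R x)).mp (hRker x)) _ (hTmem (R x))
          have hinT : ⟪T x, x⟫_ℂ = ⟪T (R x), R x⟫_ℂ := by
            calc ⟪T x, x⟫_ℂ = ⟪T (R x), R x + (x - R x)⟫_ℂ := by rw [← hTx]; congr 1; abel
              _ = ⟪T (R x), R x⟫_ℂ + ⟪T (R x), x - R x⟫_ℂ := inner_add_right _ _ _
              _ = ⟪T (R x), R x⟫_ℂ := by rw [horthT, add_zero]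
          have horthR : ⟪x - R x, R x⟫_ℂ = 0 := by
            exact ((Submodule.mem_orthogonal' M (x - R x)).mp (hRker x)) _ (hRmem x)
          have hinR : ⟪x - R x, x⟫_ℂ = ((‖x - R x‖ ^ 2 : ℝ) : ℂ) := by
            calc ⟪x - R x, x⟫_ℂ = ⟪x - R x, R x + (x - R x)⟫_ℂ := by congr 1; abel
              _ = ⟪x - R x, R x⟫_ℂ + ⟪x - R x, x - R x⟫_ℂ := inner_add_right _ _ _
              _ = ⟪x - R x, x - R x⟫_ℂ := by rw [horthR, zero_add]
              _ = ((‖x - R x‖ ^ 2 : ℝ) : ℂ) := by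
                  rw [inner_self_eq_norm_sq_to_K]; norm_num
          have e : (⟪A x, x⟫_ℂ).re = (⟪T (R x), R x⟫_ℂ).re + ‖x - R x‖ ^ 2 := by
            rw [hx, inner_add_left, hinT, hinR]
            simp [← Complex.ofReal_pow]
          rw [e]
          have h1 : c * ‖R x‖ ^ 2 ≤ (⟪T (R x), R x⟫_ℂ).re := hTm (R x) (hRmem x)
          have h2 : ‖x‖ ^ 2 = ‖R x‖ ^ 2 + ‖x - R x‖ ^ 2 := hpyth R hRsa hRR x
          nlinarith [sq_nonneg ‖x - R x‖]
        -- the operator U = lam - A is invertible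
        have hUdef : IsUnit (algebraMap ℝ (H →L[ℂ] H) lam - A) := by
          apply isUnit_of_forall_le_norm_inner_map _ (c := ⟨c - lam, by linarith⟩)
            (by exact_mod_cast sub_pos.mpr hsmall)
          intro x
          have e1 : ⟪(algebraMap ℝ (H →L[ℂ] H) lam - A) x, x⟫_ℂ =
              ((lam * ‖x‖ ^ 2 : ℝ) : ℂ) - ⟪A x, x⟫_ℂ := by
            rw [ContinuousLinearMap.sub_apply, inner_sub_left, halg, inner_smul_left,
              inner_self_eq_norm_sq_to_K]
            push_cast
            simp [Complex.conj_ofReal]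
            try ring
          have e2 : ⟪A x, x⟫_ℂ = ((((⟪T x, x⟫_ℂ).re + ‖x - R x‖ ^ 2 : ℝ)) : ℂ) := by
            have hx : A x = T x + (x - R x) := by
              simp [hAdef, ContinuousLinearMap.add_apply, ContinuousLinearMap.sub_apply]
            have horthR : ⟪x - R x, R x⟫_ℂ = 0 :=
              ((Submodule.mem_orthogonal' M (x - R x)).mp (hRker x)) _ (hRmem x)
            have hinR : ⟪x - R x, x⟫_ℂ = ((‖x - R x‖ ^ 2 : ℝ) : ℂ) := by
              calc ⟪x - R x, x⟫_ℂ = ⟪x - R x, R x + (x - R x)⟫_ℂ := by congr 1; abel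
                _ = ⟪x - R x, R x⟫_ℂ + ⟪x - R x, x - R x⟫_ℂ := inner_add_right _ _ _
                _ = ⟪x - R x, x - R x⟫_ℂ := by rw [horthR, zero_add]
                _ = ((‖x - R x‖ ^ 2 : ℝ) : ℂ) := by
                    rw [inner_self_eq_norm_sq_to_K]; norm_num
            rw [hx, inner_add_left, hinR, hTinner]
            push_cast
            simp [← Complex.ofReal_pow]
          rw [e1, e2]
          have hA1 : c * ‖x‖ ^ 2 ≤ (⟪A x, x⟫_ℂ).re := hAcoer x
          rw [e2] at hA1
          simp only [Complex.ofReal_re] at hA1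
          have : ((lam * ‖x‖ ^ 2 : ℝ) : ℂ) - ((((⟪T x, x⟫_ℂ).re + ‖x - R x‖ ^ 2 : ℝ)) : ℂ) =
              (((lam * ‖x‖ ^ 2 - ((⟪T x, x⟫_ℂ).re + ‖x - R x‖ ^ 2) : ℝ)) : ℂ) := by
            push_cast; ring
          rw [this, Complex.norm_real, Real.norm_eq_abs]; change ‖x‖ ^ 2 * (c - lam) ≤ _
          have h3 : lam * ‖x‖ ^ 2 - ((⟪T x, x⟫_ℂ).re + ‖x - R x‖ ^ 2) ≤
              -(‖x‖ ^ 2 * (c - lam)) := by nlinarith [sq_nonneg ‖x‖]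
          have := neg_abs_le (lam * ‖x‖ ^ 2 - ((⟪T x, x⟫_ℂ).re + ‖x - R x‖ ^ 2))
          linarith
        -- explicit inverse of lam - T
        obtain ⟨u, hu⟩ := hUdef
        set lamT := algebraMap ℝ (H →L[ℂ] H) lam with hlamT
        set U : H →L[ℂ] H := lamT - A with hU
        set L : H →L[ℂ] H := lamT - T with hL
        have hAR : A * R = T := by
          rw [hAdef, add_mul, sub_mul, one_mul, hTR, hR2, sub_self, add_zero]
        have hRA : R * A = T := by
          rw [hAdef, mul_add, mul_sub, mul_one, hRT, hR2, sub_self, add_zero]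
        have hTA : Commute T A := by
          have h1 : T * A = T * T := by
            rw [hAdef, mul_add, mul_sub, mul_one, hTR, sub_self, add_zero]
          have h2 : A * T = T * T := by
            rw [hAdef, add_mul, sub_mul, one_mul, hRT, sub_self, add_zero]
          show T * A = A * T
          rw [h1, h2]
        have hCRU : Commute R U := by
          rw [hU]
          exact Commute.sub_right ((Algebra.commutes lam R).symm)
            (by show R * A = A * R; rw [hRA, hAR])
        have hCLU : Commute L U := by
          rw [hL, hU]
          exact Commute.sub_left (Algebra.commutes lam U)
            (Commute.sub_right ((Algebra.commutes lam T).symm) hTA)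
        have hCRu : Commute R (↑u⁻¹ : H →L[ℂ] H) := by
          apply Commute.units_inv_right
          rw [hu]
          exact hCRU
        have hCLu : Commute L (↑u⁻¹ : H →L[ℂ] H) := by
          apply Commute.units_inv_right
          rw [hu]
          exact hCLU
        have hLR : L * R = U * R := by
          rw [hL, hU, sub_mul, sub_mul, hTR, hAR]
        have hRL : R * L = U * R := by
          rw [hL, hU, mul_sub, sub_mul, hRT, hAR, Algebra.commutes lam R]
        have hT1R : T * (1 - R) = 0 := by rw [mul_sub, mul_one, hTR, sub_self]
        have h1RT : (1 - R) * T = 0 := by rw [sub_mul, one_mul, hRT, sub_self]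
        have hL1R : L * (1 - R) = lamT * (1 - R) := by
          rw [hL, sub_mul, hT1R, sub_zero]
        have h1RL : (1 - R) * L = lamT * (1 - R) := by
          rw [hL, mul_sub, h1RT, sub_zero, hlamT]
          exact (Algebra.commutes lam (1 - R)).symm
        have hlamu : algebraMap ℝ (H →L[ℂ] H) lam⁻¹ * lamT = 1 := by
          rw [hlamT, ← map_mul, inv_mul_cancel₀ (ne_of_gt hpos), map_one]
        set D : H →L[ℂ] H := ↑u⁻¹ * R + algebraMap ℝ (H →L[ℂ] H) lam⁻¹ * (1 - R) with hD
        have huU : (↑u⁻¹ : H →L[ℂ] H) * U = 1 := by rw [← hu]; exact u.inv_mul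
        have hLD : L * D = 1 := by
          rw [hD, mul_add]
          have e1 : L * (↑u⁻¹ * R) = R := by
            rw [← mul_assoc, hCLu.eq, mul_assoc, hLR, ← mul_assoc, huU, one_mul]
          have e2 : L * (algebraMap ℝ (H →L[ℂ] H) lam⁻¹ * (1 - R)) = 1 - R := by
            rw [← mul_assoc, ← Algebra.commutes lam⁻¹ L, mul_assoc, hL1R,
              ← mul_assoc, hlamu, one_mul]
          rw [e1, e2]
          abel
        have hDL : D * L = 1 := by
          rw [hD, add_mul]
          have e1 : (↑u⁻¹ * R) * L = R := by
            rw [mul_assoc, hRL, ← mul_assoc, huU, one_mul]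
          have e2 : (algebraMap ℝ (H →L[ℂ] H) lam⁻¹ * (1 - R)) * L = 1 - R := by
            rw [mul_assoc, h1RL, ← mul_assoc, hlamu, one_mul]
          rw [e1, e2]
          abel
        exact ⟨⟨L, D, hLD, hDL⟩, rfl⟩
    · -- 1 < lam : the operator is positive definite
      have hbig : 1 < lam := hlam1 hge
      apply isUnit_of_forall_le_norm_inner_map _ (c := ⟨lam - 1, by linarith⟩)
        (by exact_mod_cast sub_pos.mpr hbig)
      intro x
      rw [hLinner]
      rw [Complex.norm_real, Real.norm_eq_abs]
      have h2 := hs_le x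
      change ‖x‖ ^ 2 * (lam - 1) ≤ _
      have h3 : ‖x‖ ^ 2 * (lam - 1) ≤ lam * ‖x‖ ^ 2 - (‖P x‖ ^ 2 + ‖Q (x - P x)‖ ^ 2) := by
        nlinarith [sq_nonneg ‖x‖]
      have := le_abs_self (lam * ‖x‖ ^ 2 - (‖P x‖ ^ 2 + ‖Q (x - P x)‖ ^ 2))
      linarith
  -- choose epsilon
  set eps : ℝ := c / 2 with hepsdef
  have hepspos : 0 < eps := by rw [hepsdef]; linarith
  have hepsc : eps < c := by rw [hepsdef]; linarith
  have heps1 : eps < 1 := by rw [hepsdef]; linarith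
  have hkey : ∀ lam ∈ spectrum ℝ T, eps < lam ↔ lam ∈ Set.Icc eps 1 := by
    intro lam hlam
    constructor
    · intro h
      rcases hspec lam hlam with h0 | ⟨h1, h2⟩
      · exact absurd (h0 ▸ h) (not_lt.mpr hepspos.le)
      · exact ⟨(hepsc.trans_le h1).le, h2⟩
    · intro h
      rcases hspec lam hlam with h0 | ⟨h1, _⟩
      · rw [h0] at h
        exact absurd h.1 (not_le.mpr hepspos)
      · exact hepsc.trans_le h1
  have hzero : ∀ lam ∈ spectrum ℝ T, ¬ eps < lam → lam = 0 := by
    intro lam hlam h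
    rcases hspec lam hlam with h0 | ⟨h1, _⟩
    · exact h0
    · exact absurd (hepsc.trans_le h1) h
  refine ⟨eps, hepspos, heps1, ?_, ?_⟩
  · -- clopen
    constructor
    · show IsClosed {x : spectrum ℝ T | (x : ℝ) ∈ Set.Icc eps 1}
      have he : {x : spectrum ℝ T | (x : ℝ) ∈ Set.Icc eps 1}
          = Subtype.val ⁻¹' Set.Icc eps 1 := rfl
      rw [he]
      exact isClosed_Icc.preimage continuous_subtype_val
    · show IsOpen {x : spectrum ℝ T | (x : ℝ) ∈ Set.Icc eps 1}
      have he : {x : spectrum ℝ T | (x : ℝ) ∈ Set.Icc eps 1}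
          = Subtype.val ⁻¹' Set.Ioi eps := by
        ext x
        simp only [Set.mem_setOf_eq, Set.mem_preimage, Set.mem_Ioi]
        exact (hkey x x.2).symm
      rw [he]
      exact isOpen_Ioi.preimage continuous_subtype_val
  · -- the spectral projection
    set f : ℝ → ℝ := fun x : ℝ => if x ∈ Set.Icc eps 1 then (1:ℝ) else 0 with hfdef
    set g : ℝ → ℝ := fun x : ℝ => if x ∈ Set.Icc eps 1 then x⁻¹ else 0 with hgdef
    have hfc : ContinuousOn f (spectrum ℝ T) := by
      intro a ha
      by_cases h : eps < a
      · have h1 : ∀ᶠ x in nhdsWithin a (spectrum ℝ T), x ∈ Set.Ioi eps :=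
          eventually_nhdsWithin_of_eventually_nhds (isOpen_Ioi.eventually_mem h)
        have h2 : ∀ᶠ x in nhdsWithin a (spectrum ℝ T), x ∈ spectrum ℝ T :=
          eventually_mem_nhdsWithin
        have hev : ∀ᶠ x in nhdsWithin a (spectrum ℝ T), f x = f a := by
          filter_upwards [h1, h2] with x hx1 hx2
          rw [hfdef]
          simp only [if_pos ((hkey x hx2).mp hx1), if_pos ((hkey a ha).mp h)]
        exact (continuousWithinAt_const).congr_of_eventuallyEq hev rfl
      · have ha0 : a = 0 := hzero a ha h
        have h1 : ∀ᶠ x in nhdsWithin a (spectrum ℝ T), x ∈ Set.Iio eps :=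
          eventually_nhdsWithin_of_eventually_nhds
            (isOpen_Iio.eventually_mem (by rw [ha0]; exact hepspos))
        have h2 : ∀ᶠ x in nhdsWithin a (spectrum ℝ T), x ∈ spectrum ℝ T :=
          eventually_mem_nhdsWithin
        have hev : ∀ᶠ x in nhdsWithin a (spectrum ℝ T), f x = f a := by
          filter_upwards [h1, h2] with x hx1 hx2
          have hx0 : x = 0 := hzero x hx2 (not_lt.mpr (le_of_lt hx1))
          rw [hfdef, ha0, hx0]
        exact (continuousWithinAt_const).congr_of_eventuallyEq hev rfl
    have hgc : ContinuousOn g (spectrum ℝ T) := by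
      intro a ha
      by_cases h : eps < a
      · have h1 : ∀ᶠ x in nhdsWithin a (spectrum ℝ T), x ∈ Set.Ioi eps :=
          eventually_nhdsWithin_of_eventually_nhds (isOpen_Ioi.eventually_mem h)
        have h2 : ∀ᶠ x in nhdsWithin a (spectrum ℝ T), x ∈ spectrum ℝ T :=
          eventually_mem_nhdsWithin
        have hev : ∀ᶠ x in nhdsWithin a (spectrum ℝ T), g x = x⁻¹ := by
          filter_upwards [h1, h2] with x hx1 hx2
          rw [hgdef]
          simp only [if_pos ((hkey x hx2).mp hx1)]
        have hga : g a = a⁻¹ := by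
          rw [hgdef]
          simp only [if_pos ((hkey a ha).mp h)]
        exact ((continuousAt_inv₀ (ne_of_gt (hepspos.trans h))).continuousWithinAt).congr_of_eventuallyEq
          hev hga
      · have ha0 : a = 0 := hzero a ha h
        have h1 : ∀ᶠ x in nhdsWithin a (spectrum ℝ T), x ∈ Set.Iio eps :=
          eventually_nhdsWithin_of_eventually_nhds
            (isOpen_Iio.eventually_mem (by rw [ha0]; exact hepspos))
        have h2 : ∀ᶠ x in nhdsWithin a (spectrum ℝ T), x ∈ spectrum ℝ T :=
          eventually_mem_nhdsWithin
        have hev : ∀ᶠ x in nhdsWithin a (spectrum ℝ T), g x = g a := by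
          filter_upwards [h1, h2] with x hx1 hx2
          have hx0 : x = 0 := hzero x hx2 (not_lt.mpr (le_of_lt hx1))
          rw [hgdef, ha0, hx0]
        exact (continuousWithinAt_const).congr_of_eventuallyEq hev rfl
    set S : H →L[ℂ] H := cfc f T with hSdef
    have hSsa : IsSelfAdjoint S := cfc_predicate f T
    have hid : cfc (fun x : ℝ => x) T = T := cfc_id' ℝ T hTsa
    have hST : S * T = T := by
      have h2 : cfc (fun x : ℝ => f x * x) T = cfc f T * cfc (fun x : ℝ => x) T :=
        cfc_mul f (fun x => x) T hfc continuousOn_id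
      have h3 : cfc (fun x : ℝ => f x * x) T = cfc (fun x : ℝ => x) T := by
        apply cfc_congr
        intro x hx
        by_cases h : eps < x
        · rw [hfdef]
          simp only [if_pos ((hkey x hx).mp h), one_mul]
        · have : x = 0 := hzero x hx h
          rw [this]
          simp
      rw [hid] at h2 h3
      rw [hSdef, ← h2, h3]
    have hTS : T * S = T := by
      have h2 : cfc (fun x : ℝ => x * f x) T = cfc (fun x : ℝ => x) T * cfc f T :=
        cfc_mul (fun x => x) f T continuousOn_id hfc
      have h3 : cfc (fun x : ℝ => x * f x) T = cfc (fun x : ℝ => x) T := by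
        apply cfc_congr
        intro x hx
        by_cases h : eps < x
        · rw [hfdef]
          simp only [if_pos ((hkey x hx).mp h), mul_one]
        · have : x = 0 := hzero x hx h
          rw [this]
          simp
      rw [hid] at h2 h3
      rw [hSdef, ← h2, h3]
    have hSfactor : S = T * cfc g T := by
      have h6 : (fun x : ℝ => x * g x) = f := by
        funext x
        rw [hgdef, hfdef]
        by_cases h : x ∈ Set.Icc eps 1
        · simp only [if_pos h]
          exact mul_inv_cancel₀ (ne_of_gt (lt_of_lt_of_le hepspos h.1))
        · simp only [if_neg h, mul_zero]
      have h5 : cfc (fun x : ℝ => x * g x) T = cfc (fun x : ℝ => x) T * cfc g T :=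
        cfc_mul (fun x => x) g T continuousOn_id hgc
      rw [hSdef, ← h6, h5, hid]
    have hSmem : ∀ x, S x ∈ M := by
      intro x
      rw [hSfactor]
      exact hTmem _
    have hSfix : ∀ m ∈ M, S m = m := by
      have hclosedset : IsClosed {y : H | S y = y} :=
        isClosed_eq S.continuous continuous_id
      have hsub : ((LinearMap.range T.toLinearMap : Submodule ℂ H) : Set H)
          ⊆ {y : H | S y = y} := by
        rintro _ ⟨x, rfl⟩
        show S (T x) = T x
        have := congrArg (fun O : H →L[ℂ] H => O x) hST
        simpa using this
      intro m hm
      have h7 := (closure_mono hsub) (hMclT m hm)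
      rwa [hclosedset.closure_eq] at h7
    have hSR : S * R = R := by
      ext x
      exact hSfix _ (hRmem x)
    have hRS : R * S = S := by
      ext x
      exact hRfix _ (hSmem x)
    calc R = star R := (hRsa.star_eq).symm
      _ = star (S * R) := by rw [hSR]
      _ = star R * star S := star_mul _ _
      _ = R * S := by rw [hRsa.star_eq, hSsa.star_eq]
      _ = S := hRS
end

section
/- Let A be a C*-subalgebra of B(H), and let P, Q be orthogonal projections on H such that [a, P] and [a, Q] are compact for all a ∈ A. If ran(P) + ran(Q) is closed and R is the orthogonal projection onto ran(P) + ran(Q), then [a, R] is compact for all a ∈ A. -/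
open ContinuousLinearMap Filter Topology

local notation "⟪" x ", " y "⟫" => @inner ℂ _ _ x y

section Aux

variable {H : Type*} [NormedAddCommGroup H] [InnerProductSpace ℂ H] [CompleteSpace H]

private lemma aux_sa_inner {P : H →L[ℂ] H} (hP : IsSelfAdjoint P) (x y : H) :
    ⟪P x, y⟫ = ⟪x, P y⟫ := by
  conv_lhs => rw [← hP.adjoint_eq]
  exact ContinuousLinearMap.adjoint_inner_left P y x

private lemma aux_re_inner_le (x y : H) : (⟪x, y⟫).re ≤ ‖x‖ * ‖y‖ := by
  simpa using re_inner_le_norm (𝕜 := ℂ) x y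

private lemma aux_norm_sq (x : H) : (⟪x, x⟫).re = ‖x‖ ^ 2 := by
  simpa using inner_self_eq_norm_sq (𝕜 := ℂ) x

private lemma aux_le_of_sq {a b : ℝ} (ha : 0 ≤ a) (hb : 0 ≤ b) (h : a ^ 2 ≤ b * a) : a ≤ b := by
  rcases eq_or_lt_of_le ha with h0 | h0
  · simpa [← h0] using hb
  · exact le_of_mul_le_mul_right (by nlinarith) h0

private lemma aux_le_of_sq' {δ v x : ℝ} (hδ : 0 < δ) (hv : 0 ≤ v) (hx : 0 ≤ x)
    (h : δ * v ^ 2 ≤ x * v) : v ≤ δ⁻¹ * x := by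
  refine aux_le_of_sq hv (by positivity) ?_
  rw [← mul_le_mul_iff_right₀ hδ]
  calc δ * v ^ 2 ≤ x * v := h
    _ = δ * (δ⁻¹ * x * v) := by field_simp

private lemma aux_inv (T : H →L[ℂ] H)
    (hpos : ∀ x : H, 0 ≤ (⟪T x, x⟫).re) (ε : ℝ) (hε : 0 < ε) :
    ∃ S : H →L[ℂ] H,
      (T + (ε : ℂ) • 1) * S = 1 ∧ S * (T + (ε : ℂ) • 1) = 1 := by
  set T' : H →L[ℂ] H := T + (ε : ℂ) • 1 with hT'
  have hT'x : ∀ x : H, T' x = T x + (ε : ℂ) • x := by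
    intro x; simp [hT']
  have hlow : ∀ x : H, ε * ‖x‖ ^ 2 ≤ (⟪T' x, x⟫).re := by
    intro x
    have h1 : ⟪T' x, x⟫ = ⟪T x, x⟫ + (ε : ℂ) * ⟪x, x⟫ := by
      rw [hT'x, inner_add_left, inner_smul_left, Complex.conj_ofReal]
    have h2 : ((ε : ℂ) * ⟪x, x⟫).re = ε * ‖x‖ ^ 2 := by
      rw [Complex.mul_re]
      rw [aux_norm_sq x]; simp
    have := hpos x
    rw [h1, Complex.add_re, h2]
    linarith
  have hanti : AntilipschitzWith (⟨ε⁻¹, by positivity⟩ : NNReal) T' := by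
    refine ContinuousLinearMap.antilipschitz_of_bound T' ?_
    intro x
    have h2 : ε * ‖x‖ ^ 2 ≤ ‖T' x‖ * ‖x‖ := le_trans (hlow x) (aux_re_inner_le _ _)
    exact aux_le_of_sq' hε (norm_nonneg x) (norm_nonneg (T' x)) h2
  have hker : LinearMap.ker (T' : H →ₗ[ℂ] H) = ⊥ := by
    rw [LinearMap.ker_eq_bot]
    exact hanti.injective
  have horth : (LinearMap.range (T' : H →ₗ[ℂ] H))ᗮ = ⊥ := by
    rw [Submodule.eq_bot_iff]
    intro y hy
    have h0 : ⟪T' y, y⟫ = 0 :=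
      (Submodule.mem_orthogonal _ y).mp hy (T' y) (LinearMap.mem_range_self _ y)
    have h1 := hlow y
    rw [h0] at h1
    simp only [Complex.zero_re] at h1
    have h2 : ‖y‖ ^ 2 ≤ 0 := le_of_mul_le_mul_left (by simpa using h1) hε
    have h3 : ‖y‖ ^ 2 = 0 := le_antisymm h2 (sq_nonneg _)
    have h4 : ‖y‖ = 0 := by
      exact (pow_eq_zero_iff two_ne_zero).mp h3
    simpa using h4
  have hrange : LinearMap.range (T' : H →ₗ[ℂ] H) = ⊤ := by
    have hcl := ContinuousLinearMap.closed_range_of_antilipschitz hanti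
    have h3 := Submodule.orthogonal_orthogonal_eq_closure (LinearMap.range (T' : H →ₗ[ℂ] H))
    rw [horth, Submodule.bot_orthogonal_eq_top] at h3
    rw [← hcl, ← h3]
  refine ⟨((ContinuousLinearEquiv.ofBijective T' hker hrange).symm : H →L[ℂ] H), ?_, ?_⟩
  · ext x
    simp only [ContinuousLinearMap.mul_apply, ContinuousLinearMap.coe_coe,
      ContinuousLinearMap.one_apply]
    have := ContinuousLinearEquiv.ofBijective_apply_symm_apply T' hker hrange x
    simpa using this
  · ext x
    simp only [ContinuousLinearMap.mul_apply, ContinuousLinearMap.coe_coe,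
      ContinuousLinearMap.one_apply]
    have := ContinuousLinearEquiv.ofBijective_symm_apply_apply T' hker hrange x
    simpa using this

end Aux

set_option maxHeartbeats 2000000 in
/-- Let `A` be a C*-subalgebra of `B(H)` and `P`, `Q` orthogonal projections whose commutators
with every element of `A` are compact. If `ran P + ran Q` is closed and `R` is the orthogonal
projection onto `ran P + ran Q`, then `[a, R]` is compact for every `a ∈ A`. -/
theorem essentiallyNormal_projection_onto_sum {H : Type*} [NormedAddCommGroup H]
    [InnerProductSpace ℂ H] [CompleteSpace H]
    (A : StarSubalgebra ℂ (H →L[ℂ] H)) (hA : IsClosed (A : Set (H →L[ℂ] H)))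
    (P Q R : H →L[ℂ] H)
    (hPsa : IsSelfAdjoint P) (hP2 : P * P = P)
    (hQsa : IsSelfAdjoint Q) (hQ2 : Q * Q = Q)
    (hPc : ∀ a ∈ A, IsCompactOperator ⇑(a * P - P * a))
    (hQc : ∀ a ∈ A, IsCompactOperator ⇑(a * Q - Q * a))
    (hclosed : IsClosed ((LinearMap.range P.toLinearMap ⊔ LinearMap.range Q.toLinearMap :
        Submodule ℂ H) : Set H))
    (hRsa : IsSelfAdjoint R) (hR2 : R * R = R)
    (hRrange : LinearMap.range R.toLinearMap
      = LinearMap.range P.toLinearMap ⊔ LinearMap.range Q.toLinearMap) :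
    ∀ a ∈ A, IsCompactOperator ⇑(a * R - R * a) := by
  classical
  have hPid : ∀ u : H, P (P u) = P u := fun u => by
    simpa [ContinuousLinearMap.mul_apply] using DFunLike.congr_fun hP2 u
  have hQid : ∀ u : H, Q (Q u) = Q u := fun u => by
    simpa [ContinuousLinearMap.mul_apply] using DFunLike.congr_fun hQ2 u
  have hRid : ∀ u : H, R (R u) = R u := fun u => by
    simpa [ContinuousLinearMap.mul_apply] using DFunLike.congr_fun hR2 u
  set Mp := LinearMap.range P.toLinearMap with hMpdef
  set Mq := LinearMap.range Q.toLinearMap with hMqdef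
  set M := Mp ⊔ Mq with hMdef
  have hmemP : ∀ x : H, x ∈ Mp ↔ P x = x := by
    intro x; constructor
    · rintro ⟨y, rfl⟩; simpa using hPid y
    · intro h; exact ⟨x, h⟩
  have hmemQ : ∀ x : H, x ∈ Mq ↔ Q x = x := by
    intro x; constructor
    · rintro ⟨y, rfl⟩; simpa using hQid y
    · intro h; exact ⟨x, h⟩
  have hmemM : ∀ x : H, x ∈ M ↔ R x = x := by
    intro x
    rw [← hRrange]
    constructor
    · rintro ⟨y, rfl⟩; simpa using hRid y
    · intro h; exact ⟨x, h⟩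
  have hPmemM : ∀ x : H, P x ∈ M := fun x => Submodule.mem_sup_left ⟨x, rfl⟩
  have hQmemM : ∀ x : H, Q x ∈ M := fun x => Submodule.mem_sup_right ⟨x, rfl⟩
  set T : H →L[ℂ] H := P + Q with hTdef
  have hTsa : IsSelfAdjoint T := hPsa.add hQsa
  have hRT : R * T = T := by
    ext x
    simp only [ContinuousLinearMap.mul_apply, hTdef, ContinuousLinearMap.add_apply]
    exact (hmemM _).mp (M.add_mem (hPmemM x) (hQmemM x))
  have hTR : T * R = T := by
    have h := congrArg star hRT
    rwa [star_mul, hTsa.star_eq, hRsa.star_eq] at h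
  have hRnorm : ∀ x : H, ‖R x‖ ≤ ‖x‖ := by
    intro x
    have h1 : ⟪R x, R x⟫ = ⟪x, R x⟫ := by
      rw [aux_sa_inner hRsa x (R x), hRid]
    have h2 : ‖R x‖ ^ 2 ≤ ‖x‖ * ‖R x‖ := by
      rw [← aux_norm_sq (R x), h1]
      exact aux_re_inner_le _ _
    exact aux_le_of_sq (norm_nonneg _) (norm_nonneg _) h2
  -- closedness and completeness
  have hMpclosed : IsClosed (Mp : Set H) := by
    have h : (Mp : Set H) = {x : H | P x = x} := Set.ext fun x => hmemP x
    rw [h]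
    exact isClosed_eq P.continuous continuous_id
  have hMqclosed : IsClosed (Mq : Set H) := by
    have h : (Mq : Set H) = {x : H | Q x = x} := Set.ext fun x => hmemQ x
    rw [h]
    exact isClosed_eq Q.continuous continuous_id
  haveI : CompleteSpace M := hclosed.completeSpace_coe
  haveI : CompleteSpace Mp := hMpclosed.completeSpace_coe
  haveI : CompleteSpace Mq := hMqclosed.completeSpace_coe
  -- the coercivity constant via the open mapping theorem
  set J : (Mp × Mq) →L[ℂ] H :=
    Mp.subtypeL.comp (ContinuousLinearMap.fst ℂ Mp Mq) +
      Mq.subtypeL.comp (ContinuousLinearMap.snd ℂ Mp Mq) with hJdef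
  have hJval : ∀ z : Mp × Mq, J z = (z.1 : H) + (z.2 : H) := fun z => rfl
  have hJmem : ∀ z : Mp × Mq, J z ∈ M := fun z => by
    rw [hJval]
    exact M.add_mem (Submodule.mem_sup_left z.1.2) (Submodule.mem_sup_right z.2.2)
  set J' : (Mp × Mq) →L[ℂ] M := J.codRestrict M hJmem with hJ'def
  have hJ'surj : Function.Surjective J' := by
    rintro ⟨y, hy⟩
    rcases Submodule.mem_sup.mp hy with ⟨u, hu, v, hv, huv⟩
    refine ⟨(⟨u, hu⟩, ⟨v, hv⟩), Subtype.ext ?_⟩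
    simpa [hJ'def, ContinuousLinearMap.coe_codRestrict_apply, hJval] using huv
  obtain ⟨C, hCpos, hC⟩ := ContinuousLinearMap.exists_preimage_norm_le J' hJ'surj
  have hcoer : ∀ x ∈ M, ‖x‖ ^ 2 ≤ C * ‖x‖ * (‖P x‖ + ‖Q x‖) := by
    intro x hx
    obtain ⟨z, hz, hznorm⟩ := hC ⟨x, hx⟩
    have hynorm : ‖(⟨x, hx⟩ : M)‖ = ‖x‖ := rfl
    rw [hynorm] at hznorm
    have hz1 : ‖(z.1 : H)‖ ≤ C * ‖x‖ := le_trans (norm_fst_le z) hznorm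
    have hz2 : ‖(z.2 : H)‖ ≤ C * ‖x‖ := le_trans (norm_snd_le z) hznorm
    have hsum : (z.1 : H) + (z.2 : H) = x := by
      have h := congrArg Subtype.val hz
      simpa [hJ'def, ContinuousLinearMap.coe_codRestrict_apply, hJval] using h
    have hPz : P (z.1 : H) = (z.1 : H) := (hmemP _).mp z.1.2
    have hQz : Q (z.2 : H) = (z.2 : H) := (hmemQ _).mp z.2.2
    have e1 : ⟪x, (z.1 : H)⟫ = ⟪P x, (z.1 : H)⟫ := by
      conv_lhs => rw [← hPz]
      exact (aux_sa_inner hPsa x (z.1 : H)).symm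
    have e2 : ⟪x, (z.2 : H)⟫ = ⟪Q x, (z.2 : H)⟫ := by
      conv_lhs => rw [← hQz]
      exact (aux_sa_inner hQsa x (z.2 : H)).symm
    have hxx : (⟪x, x⟫).re = (⟪x, (z.1 : H)⟫).re + (⟪x, (z.2 : H)⟫).re := by
      rw [← Complex.add_re, ← inner_add_right, hsum]
    calc ‖x‖ ^ 2 = (⟪x, x⟫).re := (aux_norm_sq x).symm
      _ = (⟪x, (z.1 : H)⟫).re + (⟪x, (z.2 : H)⟫).re := hxx
      _ = (⟪P x, (z.1 : H)⟫).re + (⟪Q x, (z.2 : H)⟫).re := by rw [e1, e2]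
      _ ≤ ‖P x‖ * ‖(z.1 : H)‖ + ‖Q x‖ * ‖(z.2 : H)‖ :=
          add_le_add (aux_re_inner_le _ _) (aux_re_inner_le _ _)
      _ ≤ ‖P x‖ * (C * ‖x‖) + ‖Q x‖ * (C * ‖x‖) :=
          add_le_add (mul_le_mul_of_nonneg_left hz1 (norm_nonneg _))
            (mul_le_mul_of_nonneg_left hz2 (norm_nonneg _))
      _ = C * ‖x‖ * (‖P x‖ + ‖Q x‖) := by ring
  set δ : ℝ := (2 * C ^ 2)⁻¹ with hδdef
  have hδpos : 0 < δ := by rw [hδdef]; positivity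
  have hTinner : ∀ x : H, (⟪T x, x⟫).re = ‖P x‖ ^ 2 + ‖Q x‖ ^ 2 := by
    intro x
    have hp : ⟪P x, x⟫ = ⟪P x, P x⟫ := by
      conv_lhs => rw [← hPid x]
      exact aux_sa_inner hPsa (P x) x
    have hq : ⟪Q x, x⟫ = ⟪Q x, Q x⟫ := by
      conv_lhs => rw [← hQid x]
      exact aux_sa_inner hQsa (Q x) x
    have hTx : T x = P x + Q x := by simp [hTdef]
    rw [hTx, inner_add_left, Complex.add_re, hp, hq, aux_norm_sq, aux_norm_sq]
  have hTpos : ∀ x : H, 0 ≤ (⟪T x, x⟫).re := fun x => by rw [hTinner]; positivity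
  have hδle : ∀ x ∈ M, δ * ‖x‖ ^ 2 ≤ (⟪T x, x⟫).re := by
    intro x hx
    rw [hTinner, hδdef, inv_mul_le_iff₀ (by positivity)]
    rcases eq_or_lt_of_le (norm_nonneg x) with h0 | h0
    · rw [← h0]
      have h00 : (0 : ℝ) ^ 2 = 0 := by norm_num
      rw [h00]
      positivity
    · have h1 := hcoer x hx
      have h2 : ‖x‖ ≤ C * (‖P x‖ + ‖Q x‖) := by
        refine aux_le_of_sq (norm_nonneg x) (by positivity) ?_
        calc ‖x‖ ^ 2 ≤ C * ‖x‖ * (‖P x‖ + ‖Q x‖) := h1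
          _ = C * (‖P x‖ + ‖Q x‖) * ‖x‖ := by ring
      have h3 : ‖x‖ * ‖x‖ ≤ (C * (‖P x‖ + ‖Q x‖)) * (C * (‖P x‖ + ‖Q x‖)) :=
        mul_le_mul h2 h2 (norm_nonneg x) (by positivity)
      nlinarith [h3, sq_nonneg (‖P x‖ - ‖Q x‖), sq_nonneg C]
  -- the approximating inverses
  set ε : ℕ → ℝ := fun n => ((n : ℝ) + 1)⁻¹ with hεdef
  have hεpos : ∀ n, 0 < ε n := fun n => by
    simp only [hεdef]
    positivity
  have hSex : ∀ n : ℕ, ∃ S : H →L[ℂ] H,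
      (T + ((ε n : ℝ) : ℂ) • 1) * S = 1 ∧ S * (T + ((ε n : ℝ) : ℂ) • 1) = 1 :=
    fun n => aux_inv T hTpos (ε n) (hεpos n)
  choose S hS1 hS2 using hSex
  set T' : ℕ → (H →L[ℂ] H) := fun n => T + ((ε n : ℝ) : ℂ) • 1 with hT'def
  have hT'R : ∀ n, T' n * R = R * T' n := by
    intro n
    simp only [hT'def]
    rw [add_mul, mul_add, hTR, hRT, smul_mul_assoc, mul_smul_comm, one_mul, mul_one]
  have hRS : ∀ n, R * S n = S n * R := by
    intro n
    calc R * S n = (S n * T' n) * (R * S n) := by rw [hS2, one_mul]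
      _ = S n * ((T' n * R) * S n) := by simp only [mul_assoc]
      _ = S n * ((R * T' n) * S n) := by rw [hT'R]
      _ = (S n * R) * (T' n * S n) := by simp only [mul_assoc]
      _ = S n * R := by rw [hS1, mul_one]
  have hT'RS : ∀ n (x : H), T' n (R (S n x)) = R x := by
    intro n x
    have h : (T' n * (R * S n)) x = (R * (T' n * S n)) x := by
      rw [← mul_assoc, hT'R n, mul_assoc]
    have h2 : T' n (S n x) = x := DFunLike.congr_fun (hS1 n) x
    simpa [ContinuousLinearMap.mul_apply, h2] using h
  have hRSnorm : ∀ n (x : H), ‖R (S n x)‖ ≤ δ⁻¹ * ‖x‖ := by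
    intro n x
    set v := R (S n x) with hvdef
    have hvM : v ∈ M := by
      rw [← hRrange]
      exact ⟨S n x, rfl⟩
    have h1 : δ * ‖v‖ ^ 2 ≤ (⟪T v, v⟫).re := hδle v hvM
    have h2 : (⟪T' n v, v⟫).re = (⟪T v, v⟫).re + ε n * ‖v‖ ^ 2 := by
      have hx : T' n v = T v + ((ε n : ℝ) : ℂ) • v := by simp [hT'def]
      rw [hx, inner_add_left, Complex.add_re, inner_smul_left, Complex.conj_ofReal,
        Complex.mul_re]
      rw [aux_norm_sq v]; simp
    have h3 : (⟪T' n v, v⟫).re ≤ ‖x‖ * ‖v‖ := by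
      rw [hT'RS n x]
      exact le_trans (aux_re_inner_le _ _)
        (mul_le_mul_of_nonneg_right (hRnorm x) (norm_nonneg v))
    have hε2 : 0 ≤ ε n * ‖v‖ ^ 2 := mul_nonneg (hεpos n).le (sq_nonneg _)
    have h4 : δ * ‖v‖ ^ 2 ≤ ‖x‖ * ‖v‖ := by linarith
    exact aux_le_of_sq' hδpos (norm_nonneg v) (norm_nonneg x) h4
  have hkey : ∀ n, T * S n - R = -(((ε n : ℝ) : ℂ) • (R * S n)) := by
    intro n
    have h0 : R = T * S n + ((ε n : ℝ) : ℂ) • (R * S n) := by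
      calc R = R * (T' n * S n) := by rw [hS1, mul_one]
        _ = (R * T' n) * S n := by rw [mul_assoc]
        _ = (T + ((ε n : ℝ) : ℂ) • R) * S n := by
            simp only [hT'def]
            rw [mul_add, hRT, mul_smul_comm, mul_one]
        _ = T * S n + ((ε n : ℝ) : ℂ) • (R * S n) := by
            rw [add_mul, smul_mul_assoc]
    conv_lhs => rw [h0]
    rw [sub_add_eq_sub_sub, sub_self, zero_sub]
  have hdiff : ∀ n, ‖T * S n - R‖ ≤ ε n * δ⁻¹ := by
    intro n
    rw [hkey n, norm_neg, norm_smul]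
    have h1 : ‖(((ε n : ℝ)) : ℂ)‖ = ε n := by
      rw [Complex.norm_real]
      exact abs_of_pos (hεpos n)
    have h2 : ‖R * S n‖ ≤ δ⁻¹ := by
      refine ContinuousLinearMap.opNorm_le_bound _ (inv_nonneg.mpr hδpos.le) fun x => ?_
      simpa [ContinuousLinearMap.mul_apply] using hRSnorm n x
    rw [h1]
    exact mul_le_mul_of_nonneg_left h2 (hεpos n).le
  -- compactness of the approximating commutators, and passage to the limit
  intro a ha
  have hTc : IsCompactOperator ⇑(a * T - T * a) := by
    have h : a * T - T * a = (a * P - P * a) + (a * Q - Q * a) := by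
      rw [hTdef]; noncomm_ring
    rw [h, ContinuousLinearMap.coe_add']
    exact (hPc a ha).add (hQc a ha)
  have hcomp_left : ∀ (K B : H →L[ℂ] H), IsCompactOperator ⇑K → IsCompactOperator ⇑(K * B) := by
    intro K B hK
    rw [ContinuousLinearMap.mul_def, ContinuousLinearMap.coe_comp']
    exact hK.comp_clm B
  have hcomp_right : ∀ (K B : H →L[ℂ] H), IsCompactOperator ⇑K → IsCompactOperator ⇑(B * K) := by
    intro K B hK
    rw [ContinuousLinearMap.mul_def, ContinuousLinearMap.coe_comp']
    exact hK.clm_comp B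
  have hSc : ∀ n, IsCompactOperator ⇑(a * S n - S n * a) := by
    intro n
    have hTa : T' n * a - a * T' n = T * a - a * T := by
      simp only [hT'def]
      rw [add_mul, mul_add, smul_mul_assoc, mul_smul_comm, one_mul, mul_one]
      abel
    have hswap : a * S n - S n * a = S n * ((T * a - a * T) * S n) := by
      calc a * S n - S n * a
          = (S n * (T' n * (a * S n))) - (S n * (a * (T' n * S n))) := by
            rw [← mul_assoc (S n) (T' n), hS2, one_mul, hS1, mul_one]
        _ = S n * ((T' n * a - a * T' n) * S n) := by
            simp only [mul_sub, sub_mul, mul_assoc]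
        _ = S n * ((T * a - a * T) * S n) := by rw [hTa]
    rw [hswap]
    refine hcomp_right _ _ (hcomp_left _ _ ?_)
    have h : T * a - a * T = -(a * T - T * a) := (neg_sub _ _).symm
    rw [h, ContinuousLinearMap.coe_neg']
    exact hTc.neg
  have hFc : ∀ n, IsCompactOperator ⇑(a * (T * S n) - (T * S n) * a) := by
    intro n
    have hsplit : a * (T * S n) - (T * S n) * a
        = (a * T - T * a) * S n + T * (a * S n - S n * a) := by noncomm_ring
    rw [hsplit, ContinuousLinearMap.coe_add']
    exact (hcomp_left _ _ hTc).add (hcomp_right _ _ (hSc n))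
  have htend : Tendsto (fun n => a * (T * S n) - (T * S n) * a) atTop (𝓝 (a * R - R * a)) := by
    rw [tendsto_iff_norm_sub_tendsto_zero]
    have hb : ∀ n, ‖(a * (T * S n) - (T * S n) * a) - (a * R - R * a)‖
        ≤ (2 * ‖a‖ * δ⁻¹) * ε n := by
      intro n
      have h1 : (a * (T * S n) - (T * S n) * a) - (a * R - R * a)
          = a * (T * S n - R) - (T * S n - R) * a := by noncomm_ring
      rw [h1]
      calc ‖a * (T * S n - R) - (T * S n - R) * a‖
          ≤ ‖a * (T * S n - R)‖ + ‖(T * S n - R) * a‖ := norm_sub_le _ _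
        _ ≤ ‖a‖ * ‖T * S n - R‖ + ‖T * S n - R‖ * ‖a‖ :=
            add_le_add (norm_mul_le _ _) (norm_mul_le _ _)
        _ ≤ ‖a‖ * (ε n * δ⁻¹) + (ε n * δ⁻¹) * ‖a‖ :=
            add_le_add (mul_le_mul_of_nonneg_left (hdiff n) (norm_nonneg a))
              (mul_le_mul_of_nonneg_right (hdiff n) (norm_nonneg a))
        _ = (2 * ‖a‖ * δ⁻¹) * ε n := by ring
    have hε0 : Tendsto (fun n : ℕ => (2 * ‖a‖ * δ⁻¹) * ε n) atTop (𝓝 0) := by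
      have h : Tendsto ε atTop (𝓝 0) := by
        simp only [hεdef]
        simpa [one_div] using tendsto_one_div_add_atTop_nhds_zero_nat (𝕜 := ℝ)
      simpa using h.const_mul (2 * ‖a‖ * δ⁻¹)
    exact squeeze_zero (fun n => norm_nonneg _) hb hε0
  exact isCompactOperator_of_tendsto htend (Eventually.of_forall hFc)
end

section
/- Let 𝒫 and 𝒬 be closed subspaces of a Hilbert space H and let ℛ be a closed subspace contained in 𝒫 ∩ 𝒬. Then 𝒫 + 𝒬 is closed in H if and only if (𝒫/ℛ) + (𝒬/ℛ) is closed in the quotient Hilbert space H/ℛ. -/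
/-- Let `Ps` and `Qs` be closed subspaces of a Hilbert space `H` and `Rs` a closed subspace
contained in `Ps ∩ Qs`. Then `Ps + Qs` is closed in `H` if and only if `Ps/Rs + Qs/Rs` is
closed in the quotient space `H/Rs`. -/
theorem sum_closed_iff_quotient_sum_closed {H : Type*} [NormedAddCommGroup H]
    [InnerProductSpace ℂ H] [CompleteSpace H]
    (Ps Qs Rs : Submodule ℂ H)
    (hPs : IsClosed (Ps : Set H)) (hQs : IsClosed (Qs : Set H))
    (hRs : IsClosed (Rs : Set H)) (hle : Rs ≤ Ps ⊓ Qs) :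
    IsClosed ((Ps ⊔ Qs : Submodule ℂ H) : Set H) ↔
      IsClosed ((Ps.map Rs.mkQ ⊔ Qs.map Rs.mkQ : Submodule ℂ (H ⧸ Rs)) : Set (H ⧸ Rs)) := by
  have hq : Topology.IsQuotientMap Rs.mkQ :=
    QuotientAddGroup.isQuotientMap_mk Rs.toAddSubgroup
  have h1 : Ps.map Rs.mkQ ⊔ Qs.map Rs.mkQ = (Ps ⊔ Qs).map Rs.mkQ :=
    (Submodule.map_sup _ _ _).symm
  have hle' : Rs ≤ Ps ⊔ Qs := hle.trans (inf_le_left.trans le_sup_left)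
  have h2 : Rs.mkQ ⁻¹' ((Ps ⊔ Qs).map Rs.mkQ : Set (H ⧸ Rs)) = (Ps ⊔ Qs : Submodule ℂ H) := by
    have : Submodule.comap Rs.mkQ ((Ps ⊔ Qs).map Rs.mkQ) = Ps ⊔ Qs := by
      rw [Submodule.comap_map_eq, Rs.ker_mkQ, sup_eq_left.2 hle']
    exact congrArg (SetLike.coe) this
  rw [h1, ← hq.isClosed_preimage, h2]
end

section
/- Let P and Q be orthogonal projections on a Hilbert space H. Then the commutator [P, Q] = PQ − QP is compact if and only if the operator PQ(I−P)Q P (equivalently, PQP − (PQP)²) is compact, which holds if and only if the essential spectrum of PQP restricted to the relevant summand is contained in {0, 1}. -/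
open ContinuousLinearMap Metric

section Auxiliary

variable {H : Type*} [NormedAddCommGroup H] [InnerProductSpace ℂ H] [CompleteSpace H]

local notation "⟪" x ", " y "⟫" => @inner ℂ _ _ x y

/-- If `A * A⋆` is compact, then so is `A⋆`. -/
lemma star_compact_of_mul_star {A : H →L[ℂ] H} (h : IsCompactOperator ⇑(A * star A)) :
    IsCompactOperator ⇑(star A) := by
  set D := A * star A with hD
  have key : ∀ u v : H, ‖star A u - star A v‖ ^ 2 ≤ ‖D u - D v‖ * ‖u - v‖ := by
    intro u v
    have h1 : ‖star A u - star A v‖ ^ 2 = Complex.re ⟪D (u - v), u - v⟫ := by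
      have h2 : ⟪D (u - v), u - v⟫ = ⟪star A (u - v), star A (u - v)⟫ := by
        rw [star_eq_adjoint]
        calc ⟪(A * adjoint A) (u - v), u - v⟫ = ⟪A (adjoint A (u - v)), u - v⟫ := rfl
          _ = ⟪adjoint A (u - v), adjoint A (u - v)⟫ := by
              rw [← adjoint_inner_right]
      rw [h2, map_sub]; exact (inner_self_eq_norm_sq (𝕜 := ℂ) _).symm
    rw [h1]
    calc Complex.re ⟪D (u - v), u - v⟫ ≤ ‖⟪D (u - v), u - v⟫‖ :=
          Complex.abs_re_le_norm _ |>.trans' (le_abs_self _)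
      _ ≤ ‖D (u - v)‖ * ‖u - v‖ := norm_inner_le_norm _ _
      _ = ‖D u - D v‖ * ‖u - v‖ := by rw [map_sub]
  have hDtb : TotallyBounded (⇑D '' closedBall 0 1) := by
    have := h.isCompact_closure_image_closedBall (𝕜₁ := ℂ) (f := (D : H →ₗ[ℂ] H)) 1
    exact (this.totallyBounded).subset subset_closure
  have htb : TotallyBounded (⇑(star A) '' closedBall 0 1) := by
    rw [Metric.totallyBounded_iff]
    intro ε hε
    obtain ⟨t, hts, htf, hcov⟩ := totallyBounded_iff_subset.mp hDtb _
      (dist_mem_uniformity (show (0:ℝ) < ε ^ 2 / 2 by positivity))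
    choose x hx hDx using fun (y : t) => hts y.2
    have : Finite ↥t := htf.to_subtype
    refine ⟨Set.range (fun y : t => star A (x y)), Set.finite_range _, ?_⟩
    rintro w ⟨u, hu, rfl⟩
    have := hcov (Set.mem_image_of_mem _ hu)
    rw [Set.mem_iUnion₂] at this
    obtain ⟨y, hy, hdy⟩ := this
    refine Set.mem_iUnion₂.mpr ⟨star A (x ⟨y, hy⟩), Set.mem_range_self _, ?_⟩
    have hxcb : x ⟨y, hy⟩ ∈ closedBall (0:H) 1 := hx _
    have h2 : ‖u - x ⟨y, hy⟩‖ ≤ 2 := by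
      have h3 : ‖u‖ ≤ 1 := by simpa using hu
      have h4 : ‖x ⟨y, hy⟩‖ ≤ 1 := by simpa using hxcb
      calc ‖u - x ⟨y, hy⟩‖ ≤ ‖u‖ + ‖x ⟨y, hy⟩‖ := norm_sub_le _ _
        _ ≤ 2 := by linarith
    have h5 : ‖D u - D (x ⟨y, hy⟩)‖ < ε ^ 2 / 2 := by
      have := hdy
      simp only [Set.mem_setOf_eq] at this
      rwa [hDx ⟨y, hy⟩, ← dist_eq_norm]
    have h6 : dist (star A u) (star A (x ⟨y, hy⟩)) ^ 2 < ε ^ 2 := by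
      rw [dist_eq_norm]
      calc ‖star A u - star A (x ⟨y, hy⟩)‖ ^ 2 ≤ ‖D u - D (x ⟨y, hy⟩)‖ * ‖u - x ⟨y, hy⟩‖ := key _ _
        _ ≤ ‖D u - D (x ⟨y, hy⟩)‖ * 2 := by
            have : (0:ℝ) ≤ ‖D u - D (x ⟨y, hy⟩)‖ := norm_nonneg _
            nlinarith
        _ < ε ^ 2 := by linarith
    exact mem_ball.mpr (lt_of_pow_lt_pow_left₀ 2 hε.le h6)
  have hcp : IsCompact (closure (⇑(star A) '' closedBall 0 1)) :=
    TotallyBounded.isCompact_of_isClosed htb.closure isClosed_closure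
  exact (isCompactOperator_iff_isCompact_closure_image_closedBall
    ((star A : H →L[ℂ] H) : H →ₗ[ℂ] H) zero_lt_one).mpr hcp

/-- If `l - T` is invertible modulo the compacts, then there is a continuous bump function
at `l` whose continuous functional calculus applied to `T` is compact. -/
lemma bump_compact (T : H →L[ℂ] H) (hT : IsSelfAdjoint T) (l : ℝ) (S : H →L[ℂ] H)
    (hS : IsCompactOperator ⇑(S * (l • (1 : H →L[ℂ] H) - T) - 1)) :
    ∃ f : ℝ → ℝ, Continuous f ∧ f l ≠ 0 ∧ IsCompactOperator ⇑(cfc f T) := by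
  set δ : ℝ := (2 * (‖S‖ + 1))⁻¹ with hδdef
  have hδpos : 0 < δ := by positivity
  have hδS : ‖S‖ * δ ≤ 1 / 2 := by
    rw [hδdef]
    rw [mul_inv_le_iff₀ (by positivity)]
    nlinarith [norm_nonneg S]
  set f : ℝ → ℝ := fun x => max 0 (δ - |x - l|) with hfdef
  have hfc : Continuous f := by fun_prop
  have hfl : f l ≠ 0 := by
    have : f l = δ := by simp [hfdef, max_eq_right hδpos.le]
    rw [this]; exact hδpos.ne'
  refine ⟨f, hfc, hfl, ?_⟩
  set fn : ℕ → ℝ → ℝ := fun n x => (l - x) ^ n * f x with hfndef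
  have hfnc : ∀ n, Continuous (fn n) := fun n => by fun_prop
  have hfn_bound : ∀ n x, |fn n x| ≤ δ ^ n * δ := by
    intro n x
    rcases le_or_gt δ |x - l| with hx | hx
    · have : f x = 0 := by simp [hfdef]; linarith
      simp [hfndef, this]
      positivity
    · have h1 : |(l - x) ^ n| ≤ δ ^ n := by
        rw [abs_pow]
        exact pow_le_pow_left₀ (abs_nonneg _) (by rw [abs_sub_comm]; exact hx.le) n
      have h2 : |f x| ≤ δ := by
        rw [hfdef]
        rw [abs_of_nonneg (le_max_left _ _)]
        simp only [max_le_iff]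
        constructor <;> [positivity; skip]
        have := abs_nonneg (x - l); linarith
      calc |fn n x| = |(l - x) ^ n| * |f x| := by rw [hfndef]; exact abs_mul _ _
        _ ≤ δ ^ n * δ := mul_le_mul h1 h2 (abs_nonneg _) (by positivity)
  set L : H →L[ℂ] H := l • (1 : H →L[ℂ] H) - T with hLdef
  have hstep : ∀ n, L * cfc (fn n) T = cfc (fn (n + 1)) T := by
    intro n
    have hL : L = cfc (fun x : ℝ => l - x) T := by
      rw [cfc_sub _ _ T, cfc_const l T, cfc_id' ℝ T, Algebra.algebraMap_eq_smul_one]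
    rw [hL, ← cfc_mul _ _ T]
    apply cfc_congr
    intro x _
    simp only [hfndef]
    ring
  set K : H →L[ℂ] H := S * L - 1 with hKdef
  have hind : ∀ n, IsCompactOperator ⇑(cfc f T - S ^ n * cfc (fn n) T) := by
    intro n
    induction n with
    | zero =>
      have : cfc f T - S ^ 0 * cfc (fn 0) T = 0 := by
        have : fn 0 = f := by funext x; simp [hfndef]
        rw [this, pow_zero, one_mul, sub_self]
      rw [this]
      exact isCompactOperator_zero
    | succ n ih =>
      have hEq : cfc f T - S ^ (n + 1) * cfc (fn (n + 1)) T =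
          (cfc f T - S ^ n * cfc (fn n) T) - S ^ n * (K * cfc (fn n) T) := by
        rw [← hstep n, hKdef, pow_succ]
        noncomm_ring
      rw [hEq]
      have hK1 : IsCompactOperator ⇑(K * cfc (fn n) T) := hS.comp_clm _
      have hK2 : IsCompactOperator ⇑(S ^ n * (K * cfc (fn n) T)) :=
        hK1.continuous_comp (S ^ n).continuous
      exact ih.sub hK2
  have hlim : Filter.Tendsto (fun n => cfc f T - S ^ n * cfc (fn n) T) Filter.atTop
      (nhds (cfc f T)) := by
    have hmulpow : ∀ (n : ℕ) (X : H →L[ℂ] H), ‖S ^ n * X‖ ≤ ‖S‖ ^ n * ‖X‖ := by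
      intro n
      induction n with
      | zero => intro X; simp
      | succ n ih =>
        intro X
        calc ‖S ^ (n + 1) * X‖ = ‖S ^ n * (S * X)‖ := by rw [← mul_assoc, pow_succ]
          _ ≤ ‖S‖ ^ n * ‖S * X‖ := ih _
          _ ≤ ‖S‖ ^ n * (‖S‖ * ‖X‖) := by
              exact mul_le_mul_of_nonneg_left (norm_mul_le _ _) (by positivity)
          _ = ‖S‖ ^ (n + 1) * ‖X‖ := by ring
    have hcfc_norm : ∀ n, ‖cfc (fn n) T‖ ≤ δ ^ n * δ := by
      intro n
      exact norm_cfc_le (by positivity) (fun x _ => by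
        rw [Real.norm_eq_abs]; exact hfn_bound n x)
    have hnorm : ∀ n, ‖S ^ n * cfc (fn n) T‖ ≤ (1 / 2) ^ n * δ := by
      intro n
      calc ‖S ^ n * cfc (fn n) T‖ ≤ ‖S‖ ^ n * ‖cfc (fn n) T‖ := hmulpow n _
        _ ≤ ‖S‖ ^ n * (δ ^ n * δ) := by
            exact mul_le_mul_of_nonneg_left (hcfc_norm n) (by positivity)
        _ = (‖S‖ * δ) ^ n * δ := by ring
        _ ≤ (1 / 2) ^ n * δ := by
            apply mul_le_mul_of_nonneg_right _ hδpos.le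
            exact pow_le_pow_left₀ (by positivity) hδS n
    rw [tendsto_iff_norm_sub_tendsto_zero]
    have hzero : Filter.Tendsto (fun n : ℕ => (1 / 2 : ℝ) ^ n * δ) Filter.atTop (nhds 0) := by
      have := (tendsto_pow_atTop_nhds_zero_of_lt_one (by norm_num : (0:ℝ) ≤ 1/2)
        (by norm_num : (1/2 : ℝ) < 1)).mul_const δ
      simpa using this
    apply squeeze_zero (fun n => norm_nonneg _) _ hzero
    intro n
    calc ‖cfc f T - S ^ n * cfc (fn n) T - cfc f T‖ = ‖S ^ n * cfc (fn n) T‖ := by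
          rw [sub_sub_cancel_left, norm_neg]
      _ ≤ (1 / 2) ^ n * δ := hnorm n
  have hmem : cfc f T ∈ {g : H →L[ℂ] H | IsCompactOperator ⇑g} :=
    IsClosed.mem_of_tendsto isClosed_setOf_isCompactOperator hlim
      (Filter.Eventually.of_forall fun n => hind n)
  exact hmem

end Auxiliary

/-- An operator is invertible modulo the compact operators, i.e. its image in the Calkin
algebra `B(H)/K(H)` is invertible. -/
def CalkinInvertible {H : Type*} [NormedAddCommGroup H] [InnerProductSpace ℂ H]
    [CompleteSpace H] (T : H →L[ℂ] H) : Prop :=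
  ∃ S : H →L[ℂ] H, IsCompactOperator ⇑(T * S - 1) ∧ IsCompactOperator ⇑(S * T - 1)

/-- The essential spectrum of `T`: the spectrum of the image of `T` in the Calkin algebra. -/
def essentialSpectrum {H : Type*} [NormedAddCommGroup H] [InnerProductSpace ℂ H]
    [CompleteSpace H] (T : H →L[ℂ] H) : Set ℂ :=
  {z | ¬ CalkinInvertible (algebraMap ℂ (H →L[ℂ] H) z - T)}

section MainAux

variable {H : Type*} [NormedAddCommGroup H] [InnerProductSpace ℂ H] [CompleteSpace H]

/-- If the essential spectrum of a selfadjoint `T` is contained in `{0, 1}`, then `T - T²`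
is compact. -/
lemma compact_of_essSpec_subset (T : H →L[ℂ] H) (hT : IsSelfAdjoint T)
    (hspec : essentialSpectrum T ⊆ {0, 1}) :
    IsCompactOperator ⇑(T - T * T) := by
  have hcfc : T - T * T = cfc (fun x : ℝ => x - x * x) T := by
    rw [cfc_sub _ _ T, cfc_mul _ _ T, cfc_id' ℝ T]
  rw [hcfc]
  let I : Ideal C(spectrum ℝ T, ℝ) :=
    { carrier := {g | IsCompactOperator ⇑(cfcHom (R := ℝ) hT g)}
      add_mem' := fun {g₁ g₂} h1 h2 => by
        simp only [Set.mem_setOf_eq, map_add] at *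
        exact h1.add h2
      zero_mem' := by
        simp only [Set.mem_setOf_eq, map_zero]
        exact isCompactOperator_zero
      smul_mem' := fun c g hg => by
        simp only [Set.mem_setOf_eq, smul_eq_mul, map_mul] at *
        exact hg.continuous_comp (cfcHom (R := ℝ) hT c).continuous }
  have hIc : IsClosed (I : Set C(spectrum ℝ T, ℝ)) := by
    have heq : (I : Set C(spectrum ℝ T, ℝ)) =
        (cfcHom (R := ℝ) hT) ⁻¹' {g : H →L[ℂ] H | IsCompactOperator ⇑g} := rfl
    rw [heq]
    exact IsClosed.preimage (cfcHom_isClosedEmbedding hT).continuous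
      isClosed_setOf_isCompactOperator
  have key : ContinuousMap.idealOfSet ℝ (ContinuousMap.setOfIdeal I) = I :=
    ContinuousMap.idealOfSet_ofIdeal_isClosed hIc
  have hScont : ContinuousOn (fun x : ℝ => x - x * x) (spectrum ℝ T) := by fun_prop
  rw [cfc_apply (fun x : ℝ => x - x * x) T hT hScont]
  have hmem : (⟨_, hScont.restrict⟩ : C(spectrum ℝ T, ℝ)) ∈ I := by
    rw [← key, ContinuousMap.mem_idealOfSet]
    intro x hx
    by_contra hfx
    apply hx
    have hx01 : (x : ℝ) ∉ ({0, 1} : Set ℝ) := by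
      intro hmem01
      apply hfx
      rcases hmem01 with h | h <;> simp_all [ContinuousMap.coe_mk]
    have hxC : ((x : ℝ) : ℂ) ∉ ({0, 1} : Set ℂ) := by
      intro hc
      apply hx01
      simp only [Set.mem_insert_iff, Set.mem_singleton_iff] at hc ⊢
      exact_mod_cast hc
    have hcalk : CalkinInvertible (algebraMap ℂ (H →L[ℂ] H) ((x : ℝ) : ℂ) - T) := by
      by_contra hnc
      exact hxC (hspec hnc)
    obtain ⟨S, _, hS2⟩ := hcalk
    have halg : algebraMap ℂ (H →L[ℂ] H) ((x : ℝ) : ℂ) = (x : ℝ) • (1 : H →L[ℂ] H) := by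
      rw [Algebra.algebraMap_eq_smul_one, Complex.coe_smul]
    rw [halg] at hS2
    obtain ⟨f, hfc, hfl, hfcpt⟩ := bump_compact T hT (x : ℝ) S hS2
    rw [ContinuousMap.mem_setOfIdeal]
    refine ⟨⟨_, hfc.continuousOn.restrict⟩, ?_, ?_⟩
    · show IsCompactOperator ⇑(cfcHom (R := ℝ) hT _)
      rw [← cfc_apply f T hT hfc.continuousOn]
      exact hfcpt
    · simpa using hfl
  exact hmem

/-- If `T - T²` is compact for selfadjoint `T`, then the essential spectrum of `T` is
contained in `{0, 1}`. -/
lemma essSpec_subset_of_compact (T : H →L[ℂ] H)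
    (h : IsCompactOperator ⇑(T - T * T)) :
    essentialSpectrum T ⊆ {0, 1} := by
  intro z hz
  by_contra h01
  simp only [Set.mem_insert_iff, Set.mem_singleton_iff] at h01
  push_neg at h01
  obtain ⟨hz0, hz1⟩ := h01
  set u : ℂ := (z - 1)⁻¹ with hudef
  set v : ℂ := z⁻¹ with hvdef
  have hu : u * (z - 1) = 1 := inv_mul_cancel₀ (sub_ne_zero.mpr hz1)
  have hv : v * z = 1 := inv_mul_cancel₀ hz0
  set S : H →L[ℂ] H := u • T + v • (1 - T) with hSdef
  have hid1 : (z • 1 - T) * S - 1 = (v - u) • (T * T - T) := by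
    rw [hSdef]
    simp only [mul_add, add_mul, sub_mul, mul_sub, smul_mul_assoc, mul_smul_comm, mul_one,
      one_mul, smul_smul]
    match_scalars
    · linear_combination hu - hv
    · ring
    · linear_combination hv
  have hid2 : S * (z • 1 - T) - 1 = (v - u) • (T * T - T) := by
    have hcomm : S * (z • 1 - T) = (z • 1 - T) * S := by
      rw [hSdef]
      simp only [mul_add, add_mul, sub_mul, mul_sub, smul_mul_assoc, mul_smul_comm, mul_one,
        one_mul, smul_smul]
      match_scalars <;> ring
    rw [hcomm]
    exact hid1
  have hcpt : IsCompactOperator ⇑((v - u) • (T * T - T)) := by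
    have h1 : IsCompactOperator ⇑(T * T - T) := by
      have : T * T - T = -(T - T * T) := (neg_sub _ _).symm
      rw [this]
      exact h.neg
    exact h1.smul (v - u)
  apply hz
  show CalkinInvertible _
  have halg : algebraMap ℂ (H →L[ℂ] H) z = z • 1 := Algebra.algebraMap_eq_smul_one z
  rw [halg]
  refine ⟨S, ?_, ?_⟩
  · rw [hid1]; exact hcpt
  · rw [hid2]; exact hcpt

end MainAux

/-- For orthogonal projections `P`, `Q` on a Hilbert space: the commutator `[P,Q] = PQ - QP` is
compact if and only if `PQP - (PQP)²` (equivalently `PQ(I-P)QP`) is compact, which in turn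
holds if and only if the essential spectrum of `PQP` is contained in `{0, 1}`. -/
theorem commutator_compact_iff {H : Type*} [NormedAddCommGroup H]
    [InnerProductSpace ℂ H] [CompleteSpace H] (P Q : H →L[ℂ] H)
    (hPsa : IsSelfAdjoint P) (hP2 : P * P = P)
    (hQsa : IsSelfAdjoint Q) (hQ2 : Q * Q = Q) :
    (IsCompactOperator ⇑(P * Q - Q * P) ↔
      IsCompactOperator ⇑(P * Q * P - (P * Q * P) * (P * Q * P))) ∧
    (IsCompactOperator ⇑(P * Q * P - (P * Q * P) * (P * Q * P)) ↔
      essentialSpectrum (P * Q * P) ⊆ {0, 1}) := by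
  have hP2' : ∀ X : H →L[ℂ] H, P * (P * X) = P * X := fun X => by rw [← mul_assoc, hP2]
  have hQ2' : ∀ X : H →L[ℂ] H, Q * (Q * X) = Q * X := fun X => by rw [← mul_assoc, hQ2]
  have hTsa : IsSelfAdjoint (P * Q * P) := by
    rw [IsSelfAdjoint]
    simp [star_mul, hPsa.star_eq, hQsa.star_eq, mul_assoc]
  set A : H →L[ℂ] H := P * Q - P * Q * P with hAdef
  have hstarA : star A = Q * P - P * Q * P := by
    simp [hAdef, star_sub, star_mul, hPsa.star_eq, hQsa.star_eq, mul_assoc]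
  have hAAs : A * star A = P * Q * P - (P * Q * P) * (P * Q * P) := by
    rw [hstarA, hAdef]
    simp only [mul_sub, sub_mul, mul_assoc, hP2', hQ2']
    abel
  constructor
  · constructor
    · intro hC
      have hA_eq : P * (P * Q - Q * P) = A := by
        rw [hAdef]; simp only [mul_sub, ← mul_assoc, hP2]
      have hCP_eq : (P * Q - Q * P) * P = P * Q * P - Q * P := by
        simp only [sub_mul, mul_assoc, hP2]
      have hAcpt : IsCompactOperator ⇑A := by
        rw [← hA_eq]
        exact hC.continuous_comp P.continuous
      have hstarAcpt : IsCompactOperator ⇑(star A) := by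
        have heq : star A = -((P * Q - Q * P) * P) := by
          rw [hstarA, hCP_eq, neg_sub]
        rw [heq]
        exact (hC.comp_clm P).neg
      rw [← hAAs]
      exact hstarAcpt.continuous_comp A.continuous
    · intro h
      have h1 : IsCompactOperator ⇑(A * star A) := by rw [hAAs]; exact h
      have h2 : IsCompactOperator ⇑(star A) := star_compact_of_mul_star h1
      have h4 : IsCompactOperator ⇑(star A * star (star A)) := by
        rw [star_star]
        exact h2.comp_clm A
      have h5 : IsCompactOperator ⇑(star (star A)) := star_compact_of_mul_star h4
      rw [star_star] at h5
      have hCeq : P * Q - Q * P = A - star A := by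
        rw [hstarA, hAdef]; noncomm_ring
      rw [hCeq]
      exact h5.sub h2
  · constructor
    · exact essSpec_subset_of_compact (P * Q * P)
    · exact compact_of_essSpec_subset (P * Q * P) hTsa
end

section
/- Let 𝒫 = closure of span{eₙ ⊕ 0 : n ∈ ℕ} and 𝒬 = closure of span{eₙ ⊕ (1/(n+1)) eₙ : n ∈ ℕ} in ℓ² ⊕ ℓ², where (eₙ) is the standard orthonormal basis of ℓ². Then 𝒫 + 𝒬 is dense in ℓ² ⊕ ℓ² but not closed. -/
open scoped ComplexInnerProductSpace ENNReal


/-- The Hilbert space `ℓ² ⊕ ℓ²` with the direct sum inner product. -/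
noncomputable abbrev L2Sum : Type :=
  WithLp 2 ((lp (fun _ : ℕ => ℂ) 2) × (lp (fun _ : ℕ => ℂ) 2))

/-- `𝒫` is the closed span of `{eₙ ⊕ 0 : n ∈ ℕ}` in `ℓ² ⊕ ℓ²`. -/
noncomputable def Psub : Submodule ℂ L2Sum :=
  (Submodule.span ℂ
    (Set.range fun n : ℕ =>
      (WithLp.equiv 2 _).symm (lp.single 2 n (1 : ℂ), 0))).topologicalClosure

/-- `𝒬` is the closed span of `{eₙ ⊕ (1/(n+1)) eₙ : n ∈ ℕ}` in `ℓ² ⊕ ℓ²`. -/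
noncomputable def Qsub : Submodule ℂ L2Sum :=
  (Submodule.span ℂ
    (Set.range fun n : ℕ =>
      (WithLp.equiv 2 (lp (fun _ : ℕ => ℂ) 2 × lp (fun _ : ℕ => ℂ) 2)).symm
        (lp.single 2 n (1 : ℂ), (1 / (n + 1) : ℂ) • lp.single 2 n (1 : ℂ)))).topologicalClosure

lemma Psub_snd (n : ℕ) (p : L2Sum) (hp : p ∈ Psub) : p.snd n = 0 := by
  set w : L2Sum := (WithLp.equiv 2 _).symm ((0 : lp (fun _ : ℕ => ℂ) 2), lp.single 2 n (1:ℂ))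
  have hle : Psub ≤ LinearMap.ker (innerSL ℂ w : L2Sum →ₗ[ℂ] ℂ) := by
    apply Submodule.topologicalClosure_minimal
    · rw [Submodule.span_le]
      rintro _ ⟨m, rfl⟩
      simp [w, LinearMap.mem_ker, WithLp.prod_inner_apply, lp.inner_single_left]
    · exact ContinuousLinearMap.isClosed_ker _
  have := hle hp
  simp only [LinearMap.mem_ker, ContinuousLinearMap.coe_coe, innerSL_apply_apply] at this
  simpa [w, WithLp.prod_inner_apply, lp.inner_single_left] using this

lemma Qsub_snd (n : ℕ) (q : L2Sum) (hq : q ∈ Qsub) :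
    q.snd n = (1 / ((n : ℂ) + 1)) * q.fst n := by
  set w : L2Sum := (WithLp.equiv 2 _).symm
    (lp.single 2 n ((1 / ((n : ℂ) + 1))), lp.single 2 n (-1 : ℂ))
  have hle : Qsub ≤ LinearMap.ker (innerSL ℂ w : L2Sum →ₗ[ℂ] ℂ) := by
    apply Submodule.topologicalClosure_minimal
    · rw [Submodule.span_le]
      rintro _ ⟨m, rfl⟩
      simp only [SetLike.mem_coe, LinearMap.mem_ker, ContinuousLinearMap.coe_coe, innerSL_apply_apply,
        w, WithLp.prod_inner_apply, WithLp.equiv_symm_apply, WithLp.ofLp_toLp, WithLp.ofLp_fst, WithLp.ofLp_snd,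
        lp.inner_single_left, lp.coeFn_smul, Pi.smul_apply, RCLike.inner_apply, map_div₀,
        map_one, map_add, map_natCast, map_neg, smul_eq_mul]
      rcases eq_or_ne n m with rfl | hnm
      · simp [lp.single_apply_self]
      · simp [lp.single_apply_ne _ _ _ hnm, Pi.single_eq_of_ne hnm]
    · exact ContinuousLinearMap.isClosed_ker _
  have := hle hq
  simp only [LinearMap.mem_ker, ContinuousLinearMap.coe_coe, innerSL_apply_apply, w,
    WithLp.prod_inner_apply, WithLp.equiv_symm_apply, WithLp.ofLp_toLp, WithLp.ofLp_fst, WithLp.ofLp_snd,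
    lp.inner_single_left, RCLike.inner_apply, map_div₀, map_one, map_add, map_natCast,
    map_neg] at this
  linear_combination -this

/-- With `𝒫` the closed span of `{eₙ ⊕ 0}` and `𝒬` the closed span of
`{eₙ ⊕ (1/(n+1)) eₙ}` in `ℓ² ⊕ ℓ²`, the sum `𝒫 + 𝒬` is dense but not closed. -/
theorem sum_dense_not_closed :
    Dense ((Psub ⊔ Qsub : Submodule ℂ L2Sum) : Set L2Sum) ∧
    ¬ IsClosed ((Psub ⊔ Qsub : Submodule ℂ L2Sum) : Set L2Sum) := by
  have hPmem : ∀ n : ℕ,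
      ((WithLp.equiv 2 _).symm (lp.single 2 n (1 : ℂ), 0) : L2Sum) ∈ Psub := fun n =>
    Submodule.le_topologicalClosure _ (Submodule.subset_span ⟨n, rfl⟩)
  have hQmem : ∀ n : ℕ,
      ((WithLp.equiv 2 _).symm
        (lp.single 2 n (1 : ℂ), (1 / (n + 1) : ℂ) • lp.single 2 n (1 : ℂ)) : L2Sum) ∈ Qsub :=
    fun n => Submodule.le_topologicalClosure _ (Submodule.subset_span ⟨n, rfl⟩)
  have hdense : Dense ((Psub ⊔ Qsub : Submodule ℂ L2Sum) : Set L2Sum) := by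
    rw [Submodule.dense_iff_topologicalClosure_eq_top,
      Submodule.topologicalClosure_eq_top_iff, Submodule.eq_bot_iff]
    intro v hv
    rw [Submodule.mem_orthogonal] at hv
    have h1 : ∀ n : ℕ, v.fst n = 0 := by
      intro n
      have := hv _ (Submodule.mem_sup_left (hPmem n))
      simpa [WithLp.prod_inner_apply, lp.inner_single_left] using this
    have h2 : ∀ n : ℕ, v.snd n = 0 := by
      intro n
      have := hv _ (Submodule.mem_sup_right (hQmem n))
      simp only [WithLp.prod_inner_apply, WithLp.equiv_symm_apply, WithLp.ofLp_toLp, WithLp.ofLp_fst, WithLp.ofLp_snd,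
        lp.inner_single_left, RCLike.inner_apply, map_one, one_mul, inner_smul_left,
        h1 n, add_zero, map_div₀, map_add, map_natCast] at this
      rw [zero_mul, zero_add, mul_one, mul_eq_zero] at this
      rcases this with h | h
      · exact absurd h (one_div_ne_zero (Nat.cast_add_one_ne_zero n))
      · exact h
    apply (WithLp.equiv 2 _).injective
    ext m
    · exact h1 m
    · exact h2 m
  refine ⟨hdense, fun hclosed => ?_⟩
  have hcoe : ((Psub ⊔ Qsub : Submodule ℂ L2Sum) : Set L2Sum) = Set.univ := by
    rw [← hclosed.closure_eq]; exact hdense.closure_eq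
  have hy : Memℓp (fun n : ℕ => (1 / ((n : ℂ) + 1))) 2 := by
    apply memℓp_gen
    have h2 : ((2 : ℝ≥0∞).toReal) = (2 : ℝ) := by norm_num
    rw [h2]
    have : Summable (fun n : ℕ => 1 / ((n : ℝ) + 1) ^ 2) := by
      have := (summable_nat_add_iff (f := fun n : ℕ => 1 / (n : ℝ) ^ 2) 1).2
        (Real.summable_one_div_nat_pow.2 one_lt_two)
      simpa using this
    apply this.congr
    intro n
    have : ‖(1 / ((n : ℂ) + 1))‖ = 1 / ((n : ℝ) + 1) := by
      rw [norm_div, norm_one]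
      congr 1
      have : ((n : ℂ) + 1) = ((n + 1 : ℕ) : ℂ) := by push_cast; ring
      rw [this, Complex.norm_natCast]
      push_cast; ring
    rw [this]
    simp [one_div, inv_pow]
  set y : lp (fun _ : ℕ => ℂ) 2 := ⟨_, hy⟩ with hy_def
  set x : L2Sum := (WithLp.equiv 2 _).symm ((0 : lp (fun _ : ℕ => ℂ) 2), y) with hx_def
  have hx : x ∈ (Psub ⊔ Qsub : Submodule ℂ L2Sum) := by
    have : x ∈ ((Psub ⊔ Qsub : Submodule ℂ L2Sum) : Set L2Sum) := by
      rw [hcoe]; trivial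
    exact this
  obtain ⟨p, hp, q, hq, hpq⟩ := Submodule.mem_sup.1 hx
  have hq1 : ∀ n : ℕ, q.fst n = 1 := by
    intro n
    have e1 : p.snd n = 0 := Psub_snd n p hp
    have e2 : q.snd n = (1 / ((n : ℂ) + 1)) * q.fst n := Qsub_snd n q hq
    have e3 : x.snd n = p.snd n + q.snd n := by
      rw [← hpq]; rfl
    have e4 : x.snd n = 1 / ((n : ℂ) + 1) := rfl
    rw [e4, e1, e2, zero_add] at e3
    have hne : (1 / ((n : ℂ) + 1)) ≠ 0 :=
      one_div_ne_zero (Nat.cast_add_one_ne_zero n)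
    have hmul : (1 / ((n : ℂ) + 1)) * 1 = (1 / ((n : ℂ) + 1)) * q.fst n := by
      rw [mul_one]; exact e3
    exact (mul_left_cancel₀ hne hmul).symm
  have hmem : Memℓp (fun n : ℕ => q.fst n) 2 := q.fst.2
  have hsum : Summable (fun _ : ℕ => (1 : ℝ)) := by
    have := (memℓp_gen_iff (p := 2) (by norm_num)).1 hmem
    apply this.congr
    intro n
    rw [hq1 n]
    norm_num
  have := hsum.tendsto_atTop_zero
  have h10 : (1 : ℝ) ≠ 0 := one_ne_zero
  exact h10 (tendsto_nhds_unique tendsto_const_nhds this)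
end

section
/- Let P and Q be orthogonal projections on a Hilbert space H such that ran(P) ∩ ran(Q)^⊥ = {0}, ran(P)^⊥ ∩ ran(Q) = {0}, and ran(P) + ran(Q)^⊥ is closed. Then the operator PQ, viewed as a map from ran(Q) to ran(P), is invertible (bounded with bounded inverse). -/
open ContinuousLinearMap Submodule

/-- Let `P`, `Q` be orthogonal projections on a Hilbert space such that
`ran P ∩ (ran Q)ᗮ = {0}`, `(ran P)ᗮ ∩ ran Q = {0}`, and `ran P + (ran Q)ᗮ` is closed.
Then `PQ`, viewed as the map `ran Q → ran P`, `q ↦ P q`, is invertible (bijective, hence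
with bounded inverse by the closed graph theorem). -/
theorem PQ_invertible_between_ranges {H : Type*} [NormedAddCommGroup H]
    [InnerProductSpace ℂ H] [CompleteSpace H] (P Q : H →L[ℂ] H)
    (hPsa : IsSelfAdjoint P) (hP2 : P * P = P)
    (hQsa : IsSelfAdjoint Q) (hQ2 : Q * Q = Q)
    (h1 : LinearMap.range P.toLinearMap ⊓ (LinearMap.range Q.toLinearMap)ᗮ = ⊥)
    (h2 : (LinearMap.range P.toLinearMap)ᗮ ⊓ LinearMap.range Q.toLinearMap = ⊥)
    (hclosed : IsClosed ((LinearMap.range P.toLinearMap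
        ⊔ (LinearMap.range Q.toLinearMap)ᗮ : Submodule ℂ H) : Set H)) :
    Function.Bijective
      (fun q : LinearMap.range Q.toLinearMap =>
        (⟨P q, LinearMap.mem_range_self P.toLinearMap (q : H)⟩ :
          LinearMap.range P.toLinearMap)) := by
  set Pr := LinearMap.range P.toLinearMap with hPr
  set Qr := LinearMap.range Q.toLinearMap with hQr
  -- basic facts
  have hPadj : ContinuousLinearMap.adjoint P = P := hPsa.adjoint_eq
  have hQadj : ContinuousLinearMap.adjoint Q = Q := hQsa.adjoint_eq
  have hPfix : ∀ x ∈ Pr, P x = x := by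
    rintro x ⟨y, rfl⟩
    have := congrArg (fun T : H →L[ℂ] H => T y) hP2
    simpa using this
  have hQfix : ∀ x ∈ Qr, Q x = x := by
    rintro x ⟨y, rfl⟩
    have := congrArg (fun T : H →L[ℂ] H => T y) hQ2
    simpa using this
  -- P x inner: ⟪P z, x⟫ = ⟪z, P x⟫
  have hPinner : ∀ z x : H, inner ℂ (P z) x = inner ℂ z (P x) := by
    intro z x
    conv_lhs => rw [← hPadj]
    exact ContinuousLinearMap.adjoint_inner_left P x z
  have hQinner : ∀ z x : H, inner ℂ (Q z) x = inner ℂ z (Q x) := by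
    intro z x
    conv_lhs => rw [← hQadj]
    exact ContinuousLinearMap.adjoint_inner_left Q x z
  -- kernels
  have hkerP : ∀ x : H, P x = 0 → x ∈ Prᗮ := by
    intro x hx
    rw [Submodule.mem_orthogonal]
    rintro u ⟨z, rfl⟩
    show inner ℂ (P z) x = 0
    rw [hPinner, hx, inner_zero_right]
  have hkerQ : ∀ x : H, Q x = 0 → x ∈ Qrᗮ := by
    intro x hx
    rw [Submodule.mem_orthogonal]
    rintro u ⟨z, rfl⟩
    show inner ℂ (Q z) x = 0
    rw [hQinner, hx, inner_zero_right]
  have hQker : ∀ x : H, x ∈ Qrᗮ → Q x = 0 := by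
    intro x hx
    have h0 : inner ℂ (Q x) (Q x) = 0 := by
      rw [hQinner]
      exact (Submodule.mem_orthogonal' _ _).mp hx _ (LinearMap.mem_range_self _ _)
    exact inner_self_eq_zero.mp h0
  have hPker : ∀ x : H, x ∈ Prᗮ → P x = 0 := by
    intro x hx
    have h0 : inner ℂ (P x) (P x) = 0 := by
      rw [hPinner]
      exact (Submodule.mem_orthogonal' _ _).mp hx _ (LinearMap.mem_range_self _ _)
    exact inner_self_eq_zero.mp h0
  -- closedness and completeness of ranges
  have hPc : IsClosed (Pr : Set H) := by
    have : (Pr : Set H) = {x | P x = x} := by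
      ext x
      constructor
      · intro hx; exact hPfix x hx
      · intro hx; exact ⟨x, hx⟩
    rw [this]
    exact isClosed_eq P.continuous continuous_id
  have hQc : IsClosed (Qr : Set H) := by
    have : (Qr : Set H) = {x | Q x = x} := by
      ext x
      constructor
      · intro hx; exact hQfix x hx
      · intro hx; exact ⟨x, hx⟩
    rw [this]
    exact isClosed_eq Q.continuous continuous_id
  haveI : CompleteSpace Pr := hPc.completeSpace_coe
  haveI : CompleteSpace Qr := hQc.completeSpace_coe
  haveI : CompleteSpace (Pr ⊔ Qrᗮ : Submodule ℂ H) := hclosed.completeSpace_coe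
  -- Pr ⊔ Qrᗮ = ⊤
  have htop : Pr ⊔ Qrᗮ = ⊤ := by
    rw [← Submodule.orthogonal_orthogonal (Pr ⊔ Qrᗮ)]
    rw [← Submodule.inf_orthogonal, Submodule.orthogonal_orthogonal Qr]
    rw [h2, Submodule.bot_orthogonal_eq_top]
  -- the maps
  set S : Pr →L[ℂ] Qr :=
    (Q.comp Pr.subtypeL).codRestrict Qr
      (fun p => LinearMap.mem_range_self _ _) with hS
  set T : Qr →L[ℂ] Pr :=
    (P.comp Qr.subtypeL).codRestrict Pr
      (fun q => LinearMap.mem_range_self _ _) with hT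
  -- S is injective
  have hSker : LinearMap.ker (S : Pr →ₗ[ℂ] Qr) = ⊥ := by
    rw [LinearMap.ker_eq_bot']
    intro p hp
    have hQp : Q (p : H) = 0 := congrArg Subtype.val hp
    have hp1 : (p : H) ∈ Pr ⊓ Qrᗮ := ⟨p.2, hkerQ _ hQp⟩
    rw [h1] at hp1
    exact Subtype.ext hp1
  -- S is surjective
  have hSrange : LinearMap.range (S : Pr →ₗ[ℂ] Qr) = ⊤ := by
    rw [LinearMap.range_eq_top]
    intro q
    have hq : (q : H) ∈ Pr ⊔ Qrᗮ := htop ▸ Submodule.mem_top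
    rcases Submodule.mem_sup.mp hq with ⟨p, hp, w, hw, hpw⟩
    refine ⟨⟨p, hp⟩, ?_⟩
    apply Subtype.ext
    show Q p = (q : H)
    have : Q (q : H) = Q p + Q w := by rw [← hpw]; simp
    rw [hQfix _ q.2, hQker w hw, add_zero] at this
    exact this.symm
  -- the equivalence
  set e := ContinuousLinearEquiv.ofBijective S hSker hSrange with he
  -- T is the adjoint of S
  have hTadj : T = ContinuousLinearMap.adjoint S := by
    refine (ContinuousLinearMap.eq_adjoint_iff T S).mpr fun q p => ?_
    show inner ℂ (P (q : H)) (p : H) = inner ℂ (q : H) (Q (p : H))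
    rw [hPinner, hPfix _ p.2, ← hQinner, hQfix _ q.2]
  -- R ∘ S = id, so S† ∘ R† = id, giving surjectivity of T
  have hRS : (e.symm : Qr →L[ℂ] Pr).comp S = ContinuousLinearMap.id ℂ Pr := by
    ext p
    have hsp : S p = e p := rfl
    show ((e.symm (S p) : Pr) : H) = (p : H)
    rw [hsp, e.symm_apply_apply]
  have hTsurj : Function.Surjective T := by
    intro p
    refine ⟨ContinuousLinearMap.adjoint (e.symm : Qr →L[ℂ] Pr) p, ?_⟩
    have := congrArg ContinuousLinearMap.adjoint hRS
    rw [ContinuousLinearMap.adjoint_comp, ContinuousLinearMap.adjoint_id] at this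
    rw [hTadj]
    have := congrArg (fun (A : Pr →L[ℂ] Pr) => A p) this
    simpa using this
  have hTinj : Function.Injective T := by
    intro q q' hqq
    have h0 : T (q - q') = 0 := by rw [map_sub, hqq, sub_self]
    have hPz : P ((q : H) - (q' : H)) = 0 := congrArg Subtype.val h0
    have hz : ((q : H) - (q' : H)) ∈ Prᗮ ⊓ Qr :=
      ⟨hkerP _ hPz, Submodule.sub_mem _ q.2 q'.2⟩
    rw [h2] at hz
    have : (q : H) = (q' : H) := sub_eq_zero.mp hz
    exact Subtype.ext this
  exact ⟨hTinj, hTsurj⟩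
end
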